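/- arXiv:1703.08657 — 8 statements merged into one kernel-verified Lean document; each statement's English description precedes it below -/
import Mathlib

section
/- Let K ≥ 1 be an integer, p_p > 0 a pilot power, and β_1, …, β_K > 0 large-scale fading coefficients. Define σ²_k = (2/π)·K·p_p·β_k² / (K·p_p·β_k + 1), ᾱ² = (2/π) / (p_p·(β_1 + … + β_K) + 1), and κ²_k = K·ᾱ²·β_k²·p_p / (K·ᾱ²·β_k·p_p + ᾱ² + 1 − 2/π). Then for every k, the identity-pilot estimation error is strictly smaller than the Hadamard-pilot estimation error, i.e. β_k − σ²_k < β_k − κ²_k (equivalently σ²_k > κ²_k), if and only if β_k < (1/K)·(β_1 + … + β_K); and β_k − σ²_k > β_k − κ²_k if and only if β_k > (1/K)·(β_1 + … + β_K). -/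
set_option maxHeartbeats 1000000


open Real Finset

/-- Comparison of identity-pilot and Hadamard-pilot channel-estimation errors
in a one-bit quantized massive MIMO system. -/
theorem pilot_matrix_mse_comparison
    (K : ℕ) (hK : 1 ≤ K) (pp : ℝ) (hpp : 0 < pp)
    (β : Fin K → ℝ) (hβ : ∀ k, 0 < β k)
    (σ2 κ2 : Fin K → ℝ) (α2 : ℝ)
    (hσ2 : ∀ k, σ2 k = (2 / π) * K * pp * (β k) ^ 2 / (K * pp * β k + 1))
    (hα2 : α2 = (2 / π) / (pp * (∑ i, β i) + 1))
    (hκ2 : ∀ k, κ2 k =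
      K * α2 * (β k) ^ 2 * pp / (K * α2 * (β k) * pp + α2 + 1 - 2 / π)) :
    ∀ k,
      (β k - σ2 k < β k - κ2 k ↔ β k < (1 / K) * ∑ i, β i) ∧
      (β k - σ2 k > β k - κ2 k ↔ β k > (1 / K) * ∑ i, β i) := by
  have hπ : (0:ℝ) < π := Real.pi_pos
  have hc1 : (2 / π : ℝ) < 1 := by
    rw [div_lt_one hπ]; linarith [Real.pi_gt_three]
  have hc0 : (0:ℝ) < 2 / π := by positivity
  have hK1 : (1:ℝ) ≤ (K:ℝ) := by exact_mod_cast hK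
  have hKR : (0:ℝ) < (K:ℝ) := by linarith
  intro k
  have hS : 0 < ∑ i, β i := Finset.sum_pos (fun i _ => hβ i) ⟨k, mem_univ k⟩
  set S := ∑ i, β i with hSdef
  have hbk := hβ k
  have hDS : (0:ℝ) < pp * S + 1 := by positivity
  have hD1 : (0:ℝ) < (K:ℝ) * pp * β k + 1 := by positivity
  have hD2 : (0:ℝ) < (2/π) * K * (β k) * pp + (1 - 2/π) * (pp * S) + 1 := by
    have h1 : 0 < (1 - 2/π) * (pp * S) := by
      apply mul_pos (by linarith) (by positivity)
    nlinarith [mul_pos (mul_pos (mul_pos hc0 hKR) hbk) hpp]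
  have hA : (0:ℝ) < (2/π) * K * pp * (β k) ^ 2 := by positivity
  have hdenEq : (K:ℝ) * α2 * (β k) * pp + α2 + 1 - 2 / π
      = ((2/π) * K * (β k) * pp + (1 - 2/π) * (pp * S) + 1) / (pp * S + 1) := by
    rw [hα2]
    field_simp
    ring
  have hκ : κ2 k = ((2/π) * K * pp * (β k) ^ 2)
      / ((2/π) * K * (β k) * pp + (1 - 2/π) * (pp * S) + 1) := by
    rw [hκ2, hdenEq, hα2]
    rw [div_eq_div_iff (div_pos hD2 hDS).ne' hD2.ne']
    field_simp
  have hlin : (K:ℝ) * pp * β k + 1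
      < (2/π) * K * (β k) * pp + (1 - 2/π) * (pp * S) + 1 ↔ (K:ℝ) * β k < S := by
    constructor
    · intro h; nlinarith [mul_pos (sub_pos.mpr hc1) hpp]
    · intro h
      nlinarith [mul_pos (mul_pos (sub_pos.mpr hc1) hpp) (sub_pos.mpr h)]
  have hlin2 : (2/π) * K * (β k) * pp + (1 - 2/π) * (pp * S) + 1
      < (K:ℝ) * pp * β k + 1 ↔ S < (K:ℝ) * β k := by
    constructor
    · intro h; nlinarith [mul_pos (sub_pos.mpr hc1) hpp]
    · intro h
      nlinarith [mul_pos (mul_pos (sub_pos.mpr hc1) hpp) (sub_pos.mpr h)]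
  have key : κ2 k < σ2 k ↔ (K:ℝ) * β k < S := by
    rw [hκ, hσ2, div_lt_div_iff_of_pos_left hA hD2 hD1, hlin]
  have key2 : σ2 k < κ2 k ↔ S < (K:ℝ) * β k := by
    rw [hκ, hσ2, div_lt_div_iff_of_pos_left hA hD1 hD2, hlin2]
  have havg : (1/(K:ℝ)) * S = S / K := by ring
  constructor
  · rw [sub_lt_sub_iff_left, key, havg, lt_div_iff₀ hKR, mul_comm]
  · rw [gt_iff_lt, sub_lt_sub_iff_left, key2, gt_iff_lt, havg, div_lt_iff₀ hKR,
      mul_comm]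
end

section
/- Fix E_S > 0 and set p_{S,i} = E_S/M for every i = 1,…,K (all other parameters fixed, independent of M). Then, as M → ∞ along the natural numbers, the double-quantized rate converges: R̃_k(M) → ((τ_c − 2τ_p)/(2τ_c))·log₂(1 + (2/π)·E_S·σ²_{SR,k}). -/
set_option maxHeartbeats 1000000


open Real Finset Filter

/-- Power-scaling law at the sources: with `p_{S,i} = E_S/M`, the double-quantized
rate `R̃_k(M)` converges, as the number of relay antennas `M → ∞`, to
`((τc − 2τp)/(2τc))·log₂(1 + (2/π)·E_S·σ²_{SR,k})`. -/
theorem doubly_quantized_rate_source_power_scaling_limit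
    (K : ℕ) (hK : 1 ≤ K)
    (τc τp pR ES : ℝ) (hτp : 0 < τp) (hτc : 2 * τp < τc) (hpR : 0 < pR)
    (hES : 0 < ES)
    (βSR βRD σSR2 σRD2 : Fin K → ℝ)
    (hβSR : ∀ i, 0 < βSR i) (hβRD : ∀ i, 0 < βRD i)
    (hσSR : ∀ i, 0 < σSR2 i) (hσRD : ∀ i, 0 < σRD2 i)
    (pS : ℕ → Fin K → ℝ) (hpS : ∀ M i, pS M i = ES / M)
    (t A B C D E F G R : ℕ → Fin K → ℝ)
    (ht : ∀ M k, t M k =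
      M * (σRD2 k) ^ 2 * σSR2 k + βRD k * ∑ n, σSR2 n * σRD2 n)
    (hA : ∀ M k, A M k = pS M k * (M : ℝ) ^ 4 * (σSR2 k) ^ 2 * (σRD2 k) ^ 2)
    (hB : ∀ M k, B M k = pS M k * (M : ℝ) ^ 2 *
      (M * (σSR2 k) ^ 2 * σRD2 k * βRD k + βSR k * t M k))
    (hC : ∀ M k, C M k = (M : ℝ) ^ 2 * ∑ i ∈ univ.filter (· ≠ k),
      pS M i * (M * (σSR2 i) ^ 2 * σRD2 i * βRD k + βSR i * t M k))
    (hD : ∀ M k, D M k = (M : ℝ) ^ 2 * t M k)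
    (hE : ∀ M k, E M k =
      (π / 2 - 1) * (1 + ∑ n, pS M n * βSR n) * (M : ℝ) ^ 2 * t M k)
    (hF : ∀ M k, F M k =
      βRD k * (π / 2 - 1) * (M : ℝ) ^ 3 *
        (∑ n, pS M n * (σSR2 n) ^ 2 * σRD2 n) +
      βRD k * ((M : ℝ) ^ 2 * π / 2) * (π / 2 - 1) * (1 + ∑ n, pS M n * βSR n) *
        ∑ n, σSR2 n * σRD2 n)
    (hG : ∀ M k, G M k =
      ((M : ℝ) ^ 3 * π / (2 * pR)) * (∑ n, pS M n * (σSR2 n) ^ 2 * σRD2 n) +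
      ((M : ℝ) ^ 2 * π ^ 2 / (4 * pR)) * (1 + ∑ n, pS M n * βSR n) *
        ∑ n, σSR2 n * σRD2 n)
    (hR : ∀ M k, R M k = ((τc - 2 * τp) / (2 * τc)) *
      Real.logb 2 (1 + A M k / (B M k + C M k + D M k + E M k + F M k + G M k))) :
    ∀ k, Tendsto (fun M : ℕ => R M k) atTop
      (nhds (((τc - 2 * τp) / (2 * τc)) *
        Real.logb 2 (1 + (2 / π) * ES * σSR2 k))) := by
  intro k
  set S2 : ℝ := ∑ n, σSR2 n * σRD2 n with hS2
  set S3 : ℝ := ∑ n, (σSR2 n) ^ 2 * σRD2 n with hS3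
  set Sβ : ℝ := ∑ n, βSR n with hSβdef
  set d1 : ℝ := (σRD2 k) ^ 2 * σSR2 k with hd1
  set d2 : ℝ := βRD k * S2 with hd2
  set Sc : ℝ := ∑ i ∈ univ.filter (· ≠ k),
      ((σSR2 i) ^ 2 * σRD2 i * βRD k + βSR i * d1) with hScdef
  set Sb : ℝ := ∑ i ∈ univ.filter (· ≠ k), βSR i with hSbdef
  set a' : ℝ := (σSR2 k) ^ 2 * σRD2 k * βRD k with ha'
  set N : ℝ := ES * (σSR2 k) ^ 2 * (σRD2 k) ^ 2 with hN
  set g : ℝ → ℝ := fun v =>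
    (ES * a' * v + ES * βSR k * d1 * v + ES * βSR k * d2 * v ^ 2)
    + (ES * Sc * v + ES * d2 * Sb * v ^ 2)
    + (d1 + d2 * v)
    + (π / 2 - 1) * (1 + ES * Sβ * v) * (d1 + d2 * v)
    + (βRD k * (π / 2 - 1) * ES * S3 * v
        + βRD k * (π / 2) * (π / 2 - 1) * (1 + ES * Sβ * v) * S2 * v)
    + ((π / (2 * pR)) * ES * S3 * v
        + (π ^ 2 / (4 * pR)) * (1 + ES * Sβ * v) * S2 * v) with hgdef
  have htk : ∀ M : ℕ, t M k = M * d1 + d2 := by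
    intro M; rw [ht]; ring
  have hsum3 : ∀ M : ℕ, (∑ n, pS M n * (σSR2 n) ^ 2 * σRD2 n) = ES / M * S3 := by
    intro M
    rw [hS3, Finset.mul_sum]
    exact Finset.sum_congr rfl fun n _ => by rw [hpS]; ring
  have hsumβ : ∀ M : ℕ, (∑ n, pS M n * βSR n) = ES / M * Sβ := by
    intro M
    rw [hSβdef, Finset.mul_sum]
    exact Finset.sum_congr rfl fun n _ => by rw [hpS]
  have hsumC : ∀ M : ℕ,
      (∑ i ∈ univ.filter (· ≠ k),
        pS M i * (M * (σSR2 i) ^ 2 * σRD2 i * βRD k + βSR i * t M k))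
      = ES / M * ((M : ℝ) * Sc + d2 * Sb) := by
    intro M
    have hterm : ∀ i ∈ univ.filter (· ≠ k),
        pS M i * ((M : ℝ) * (σSR2 i) ^ 2 * σRD2 i * βRD k + βSR i * t M k)
        = (ES / M * M) * ((σSR2 i) ^ 2 * σRD2 i * βRD k + βSR i * d1)
          + (ES / M * d2) * βSR i := by
      intro i _; rw [hpS, htk]; ring
    rw [Finset.sum_congr rfl hterm, Finset.sum_add_distrib,
      ← Finset.mul_sum, ← Finset.mul_sum, ← hScdef, ← hSbdef]
    ring
  have hnum : ∀ M : ℕ, 1 ≤ M → A M k = (M : ℝ) ^ 3 * N := by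
    intro M hM
    have hM0 : (M : ℝ) ≠ 0 := Nat.cast_ne_zero.mpr (by omega)
    rw [hA, hpS, hN]
    field_simp
  have hden : ∀ M : ℕ, 1 ≤ M →
      B M k + C M k + D M k + E M k + F M k + G M k
        = (M : ℝ) ^ 3 * g (1 / M) := by
    intro M hM
    have hM0 : (M : ℝ) ≠ 0 := Nat.cast_ne_zero.mpr (by omega)
    rw [hB, hC, hD, hE, hF, hG, hsumC M, htk M, hsum3 M, hsumβ M, hpS M k, hgdef]
    beta_reduce
    field_simp
    ring
  have hkey : ∀ᶠ M : ℕ in atTop,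
      R M k = ((τc - 2 * τp) / (2 * τc)) *
        Real.logb 2 (1 + N / g (1 / (M : ℝ))) := by
    filter_upwards [eventually_ge_atTop 1] with M hM
    have hM0 : (M : ℝ) ≠ 0 := Nat.cast_ne_zero.mpr (by omega)
    rw [hR, hnum M hM, hden M hM,
      mul_div_mul_left _ _ (pow_ne_zero 3 hM0)]
  have hgcont : Continuous g := by
    rw [hgdef]; fun_prop
  have h2 : Tendsto (fun M : ℕ => g (1 / (M : ℝ))) atTop (nhds (g 0)) :=
    (hgcont.tendsto 0).comp tendsto_one_div_atTop_nhds_zero_nat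
  have hg0 : g 0 = π / 2 * d1 := by
    rw [hgdef]; simp; ring
  have hd1pos : 0 < d1 := by
    rw [hd1]; exact mul_pos (pow_pos (hσRD k) 2) (hσSR k)
  have hπ2 : (1 : ℝ) < π / 2 := by
    have := Real.pi_gt_three; linarith
  have hg0pos : 0 < g 0 := by
    rw [hg0]; exact mul_pos (by linarith) hd1pos
  have hNpos : 0 < N := by
    rw [hN]
    exact mul_pos (mul_pos hES (pow_pos (hσSR k) 2)) (pow_pos (hσRD k) 2)
  have h3 : Tendsto (fun M : ℕ => 1 + N / g (1 / (M : ℝ))) atTop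
      (nhds (1 + N / g 0)) :=
    tendsto_const_nhds.add (tendsto_const_nhds.div h2 (ne_of_gt hg0pos))
  have harg : (1 : ℝ) + N / g 0 ≠ 0 := by
    have : 0 < N / g 0 := div_pos hNpos hg0pos
    linarith
  have h4 : Tendsto (fun M : ℕ => Real.logb 2 (1 + N / g (1 / (M : ℝ)))) atTop
      (nhds (Real.logb 2 (1 + N / g 0))) :=
    (Real.continuousAt_logb harg).tendsto.comp h3
  have h5 := h4.const_mul ((τc - 2 * τp) / (2 * τc))
  have hval : N / g 0 = 2 / π * ES * σSR2 k := by
    have hπ0 : π ≠ 0 := ne_of_gt Real.pi_pos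
    rw [hg0, hN, hd1]
    field_simp
    exact mul_div_cancel_right₀ _ (ne_of_gt (hσRD k))
  rw [hval] at h5
  exact Filter.Tendsto.congr' (Filter.EventuallyEq.symm hkey) h5
end

section
/- Fix E_S > 0 and set p_{S,i} = E_S/M for every i = 1,…,K (all other parameters fixed, independent of M). Then, as M → ∞ along the natural numbers, the unquantized rate converges: R^p_k(M) → ((τ_c − 2τ_p)/(2τ_c))·log₂(1 + E_S·σ̂²_{SR,k}). -/
open Real Finset Filter Topology

lemma aux_quad_tendsto (c0 c1 c2 : ℝ) :
    Tendsto (fun M : ℕ => c0 + c1 * (1 / (M : ℝ)) + c2 * (1 / (M : ℝ)) ^ 2) atTop (𝓝 c0) := by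
  have h : Tendsto (fun M : ℕ => (1 : ℝ) / M) atTop (𝓝 0) := tendsto_one_div_atTop_nhds_zero_nat
  have hc : Continuous (fun x : ℝ => c0 + c1 * x + c2 * x ^ 2) := by continuity
  simpa [Function.comp_def] using (hc.continuousAt.tendsto).comp h

/-- Power-scaling law at the sources for the unquantized system: with
`p_{S,i} = E_S/M`, the perfect-ADC/perfect-DAC rate `R^p_k(M)` converges, as the
number of relay antennas `M → ∞`, to
`((τc − 2τp)/(2τc))·log₂(1 + E_S·σ̂²_{SR,k})`. -/
theorem unquantized_rate_source_power_scaling_limit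
    (K : ℕ) (hK : 1 ≤ K)
    (τc τp pR ES : ℝ) (hτp : 0 < τp) (hτc : 2 * τp < τc) (hpR : 0 < pR)
    (hES : 0 < ES)
    (βSR βRD σhSR2 σhRD2 : Fin K → ℝ)
    (hβSR : ∀ i, 0 < βSR i) (hβRD : ∀ i, 0 < βRD i)
    (hσhSR : ∀ i, 0 < σhSR2 i) (hσhRD : ∀ i, 0 < σhRD2 i)
    (pS : ℕ → Fin K → ℝ) (hpS : ∀ M i, pS M i = ES / M)
    (th Ah Bh Ch Dh : ℕ → Fin K → ℝ) (αd γ2 : ℕ → ℝ) (Rp : ℕ → Fin K → ℝ)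
    (hth : ∀ M k, th M k =
      M * (σhRD2 k) ^ 2 * σhSR2 k + βRD k * ∑ n, σhSR2 n * σhRD2 n)
    (hAh : ∀ M k, Ah M k = pS M k * (M : ℝ) ^ 4 * (σhSR2 k) ^ 2 * (σhRD2 k) ^ 2)
    (hBh : ∀ M k, Bh M k = pS M k * (M : ℝ) ^ 2 *
      (M * (σhSR2 k) ^ 2 * σhRD2 k * βRD k + βSR k * th M k))
    (hCh : ∀ M k, Ch M k = (M : ℝ) ^ 2 * ∑ i ∈ univ.filter (· ≠ k),
      pS M i * (M * (σhSR2 i) ^ 2 * σhRD2 i * βRD k + βSR i * th M k))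
    (hDh : ∀ M k, Dh M k = (M : ℝ) ^ 2 * th M k)
    (hαd : ∀ M, αd M = M * (∑ n, σhSR2 n * σhRD2 n) +
      M * ∑ n, σhSR2 n * σhRD2 n * (M * pS M n * σhSR2 n + ∑ i, pS M i * βSR i))
    (hγ2 : ∀ M, γ2 M = pR / M)
    (hRp : ∀ M k, Rp M k = ((τc - 2 * τp) / (2 * τc)) *
      Real.logb 2 (1 + Ah M k / (Bh M k + Ch M k + Dh M k + αd M / γ2 M))) :
    ∀ k, Tendsto (fun M : ℕ => Rp M k) atTop
      (nhds (((τc - 2 * τp) / (2 * τc)) *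
        Real.logb 2 (1 + ES * σhSR2 k))) := by
  intro k
  set a := σhSR2 k with ha_def
  set b := σhRD2 k with hb_def
  set βk := βRD k with hβk_def
  set S := ∑ n, σhSR2 n * σhRD2 n with hS_def
  set T1 := ∑ i ∈ univ.filter (· ≠ k), (σhSR2 i) ^ 2 * σhRD2 i with hT1_def
  set T2 := ∑ i ∈ univ.filter (· ≠ k), βSR i with hT2_def
  set Tσ := ∑ n, σhSR2 n * σhRD2 n * σhSR2 n with hTσ_def
  set Tβ := ∑ n, βSR n with hTβ_def
  have ha : 0 < a := hσhSR k
  have hb : 0 < b := hσhRD k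
  have hab : (0:ℝ) < a * b ^ 2 := by positivity
  set C1 : ℝ := ES * (a ^ 2 * b * βk + βSR k * a * b ^ 2) + ES * (βk * T1 + a * b ^ 2 * T2)
      + βk * S + (S + ES * Tσ) / pR with hC1_def
  set C2 : ℝ := ES * βSR k * βk * S + ES * βk * S * T2 + ES * Tβ * S / pR with hC2_def
  -- main SINR limit
  have hsinr : Tendsto (fun M : ℕ => Ah M k / (Bh M k + Ch M k + Dh M k + αd M / γ2 M))
      atTop (𝓝 (ES * a)) := by
    have hq := aux_quad_tendsto (a * b ^ 2) C1 C2
    have h2 : Tendsto (fun M : ℕ =>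
        (ES * a ^ 2 * b ^ 2) / (a * b ^ 2 + C1 * (1 / (M : ℝ)) + C2 * (1 / (M : ℝ)) ^ 2))
        atTop (𝓝 (ES * a ^ 2 * b ^ 2 / (a * b ^ 2))) := tendsto_const_nhds.div hq hab.ne'
    rw [show ES * a ^ 2 * b ^ 2 / (a * b ^ 2) = ES * a by field_simp] at h2
    refine h2.congr' ?_
    filter_upwards [eventually_ge_atTop 1] with M hM
    have hm0 : (M : ℝ) ≠ 0 := by
      have : (1 : ℝ) ≤ (M : ℝ) := by exact_mod_cast hM
      linarith
    have hthk : th M k = (M : ℝ) * b ^ 2 * a + βk * S := by rw [hth]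
    have hαin : ∑ i, pS M i * βSR i = ES / (M : ℝ) * Tβ := by
      simp only [hpS]
      rw [← Finset.mul_sum]
    have hαsum : ∑ n, σhSR2 n * σhRD2 n * ((M : ℝ) * pS M n * σhSR2 n + ∑ i, pS M i * βSR i)
        = (M : ℝ) * (ES / (M : ℝ)) * Tσ + ES / (M : ℝ) * Tβ * S := by
      calc ∑ n, σhSR2 n * σhRD2 n * ((M : ℝ) * pS M n * σhSR2 n + ∑ i, pS M i * βSR i)
          = ∑ n, (((M : ℝ) * (ES / (M : ℝ))) * (σhSR2 n * σhRD2 n * σhSR2 n)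
              + (ES / (M : ℝ) * Tβ) * (σhSR2 n * σhRD2 n)) := by
            refine Finset.sum_congr rfl fun n _ => ?_
            rw [hpS, hαin]; ring
        _ = _ := by
            rw [Finset.sum_add_distrib, ← Finset.mul_sum, ← Finset.mul_sum]
    have hα : αd M = (M : ℝ) * S
        + (M : ℝ) * ((M : ℝ) * (ES / (M : ℝ)) * Tσ + ES / (M : ℝ) * Tβ * S) := by
      rw [hαd, hαsum]
    have hCsum : ∑ i ∈ univ.filter (· ≠ k),
        pS M i * ((M : ℝ) * (σhSR2 i) ^ 2 * σhRD2 i * βk + βSR i * th M k)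
        = ES / (M : ℝ) * ((M : ℝ) * βk * T1 + ((M : ℝ) * b ^ 2 * a + βk * S) * T2) := by
      calc ∑ i ∈ univ.filter (· ≠ k),
            pS M i * ((M : ℝ) * (σhSR2 i) ^ 2 * σhRD2 i * βk + βSR i * th M k)
          = ∑ i ∈ univ.filter (· ≠ k),
            ((ES / (M : ℝ) * (M : ℝ) * βk) * ((σhSR2 i) ^ 2 * σhRD2 i)
              + (ES / (M : ℝ) * ((M : ℝ) * b ^ 2 * a + βk * S)) * βSR i) := by
            refine Finset.sum_congr rfl fun i _ => ?_
            rw [hpS, hthk]; ring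
        _ = _ := by
            rw [Finset.sum_add_distrib, ← Finset.mul_sum, ← Finset.mul_sum]; ring
    have hden : Bh M k + Ch M k + Dh M k + αd M / γ2 M
        = (M : ℝ) ^ 3 * (a * b ^ 2 + C1 * (1 / (M : ℝ)) + C2 * (1 / (M : ℝ)) ^ 2) := by
      rw [hBh, hCh, hDh, hCsum, hα, hγ2, hthk, hpS, hC1_def, hC2_def]
      field_simp
      ring
    rw [hAh, hpS, hden,
      show ES / (M : ℝ) * (M : ℝ) ^ 4 * a ^ 2 * b ^ 2 = (M : ℝ) ^ 3 * (ES * a ^ 2 * b ^ 2) by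
        field_simp,
      mul_div_mul_left _ _ (pow_ne_zero 3 hm0)]
  have h1 : Tendsto (fun M : ℕ => 1 + Ah M k / (Bh M k + Ch M k + Dh M k + αd M / γ2 M))
      atTop (𝓝 (1 + ES * a)) := tendsto_const_nhds.add hsinr
  have hne : (1 : ℝ) + ES * a ≠ 0 := by positivity
  have hlog : Tendsto (fun M : ℕ =>
      Real.logb 2 (1 + Ah M k / (Bh M k + Ch M k + Dh M k + αd M / γ2 M))) atTop
      (𝓝 (Real.logb 2 (1 + ES * a))) := by
    simpa [Function.comp_def] using ((Real.continuousAt_logb (b := 2) hne).tendsto).comp h1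
  have := hlog.const_mul ((τc - 2 * τp) / (2 * τc))
  refine Tendsto.congr (fun M => ?_) this
  rw [hRp]
end

section
/- Fix E_R > 0, a common source power p_S > 0 (p_{S,i} = p_S for all i), and set the relay power p_R = E_R/M (all other parameters fixed, independent of M). Then, as M → ∞ along the natural numbers, the double-quantized rate converges: R̃_k(M) → ((τ_c − 2τ_p)/(2τ_c))·log₂(1 + (2E_R/π)·σ⁴_{SR,k}σ⁴_{RD,k} / Σ_{n=1}^K σ⁴_{SR,n}σ²_{RD,n}). -/
open Real Finset Filter

/-- Power-scaling law at the relay: with common source power `p_S` and relay power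
`p_R = E_R/M`, the double-quantized rate `R̃_k(M)` converges, as `M → ∞`, to
`((τc − 2τp)/(2τc))·log₂(1 + (2E_R/π)·σ⁴_{SR,k}σ⁴_{RD,k} / Σ_n σ⁴_{SR,n}σ²_{RD,n})`. -/
theorem doubly_quantized_rate_relay_power_scaling_limit
    (K : ℕ) (hK : 1 ≤ K)
    (τc τp ER pSv : ℝ) (hτp : 0 < τp) (hτc : 2 * τp < τc) (hER : 0 < ER)
    (hpSv : 0 < pSv)
    (βSR βRD σSR2 σRD2 : Fin K → ℝ)
    (hβSR : ∀ i, 0 < βSR i) (hβRD : ∀ i, 0 < βRD i)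
    (hσSR : ∀ i, 0 < σSR2 i) (hσRD : ∀ i, 0 < σRD2 i)
    (pS : Fin K → ℝ) (hpS : ∀ i, pS i = pSv)
    (pR : ℕ → ℝ) (hpR : ∀ M, pR M = ER / M)
    (t A B C D E F G R : ℕ → Fin K → ℝ)
    (ht : ∀ M k, t M k =
      M * (σRD2 k) ^ 2 * σSR2 k + βRD k * ∑ n, σSR2 n * σRD2 n)
    (hA : ∀ M k, A M k = pS k * (M : ℝ) ^ 4 * (σSR2 k) ^ 2 * (σRD2 k) ^ 2)
    (hB : ∀ M k, B M k = pS k * (M : ℝ) ^ 2 *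
      (M * (σSR2 k) ^ 2 * σRD2 k * βRD k + βSR k * t M k))
    (hC : ∀ M k, C M k = (M : ℝ) ^ 2 * ∑ i ∈ univ.filter (· ≠ k),
      pS i * (M * (σSR2 i) ^ 2 * σRD2 i * βRD k + βSR i * t M k))
    (hD : ∀ M k, D M k = (M : ℝ) ^ 2 * t M k)
    (hE : ∀ M k, E M k =
      (π / 2 - 1) * (1 + ∑ n, pS n * βSR n) * (M : ℝ) ^ 2 * t M k)
    (hF : ∀ M k, F M k =
      βRD k * (π / 2 - 1) * (M : ℝ) ^ 3 *
        (∑ n, pS n * (σSR2 n) ^ 2 * σRD2 n) +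
      βRD k * ((M : ℝ) ^ 2 * π / 2) * (π / 2 - 1) * (1 + ∑ n, pS n * βSR n) *
        ∑ n, σSR2 n * σRD2 n)
    (hG : ∀ M k, G M k =
      ((M : ℝ) ^ 3 * π / (2 * pR M)) * (∑ n, pS n * (σSR2 n) ^ 2 * σRD2 n) +
      ((M : ℝ) ^ 2 * π ^ 2 / (4 * pR M)) * (1 + ∑ n, pS n * βSR n) *
        ∑ n, σSR2 n * σRD2 n)
    (hR : ∀ M k, R M k = ((τc - 2 * τp) / (2 * τc)) *
      Real.logb 2 (1 + A M k / (B M k + C M k + D M k + E M k + F M k + G M k))) :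
    ∀ k, Tendsto (fun M : ℕ => R M k) atTop
      (nhds (((τc - 2 * τp) / (2 * τc)) *
        Real.logb 2 (1 + (2 * ER / π) * ((σSR2 k) ^ 2 * (σRD2 k) ^ 2 /
          ∑ n, (σSR2 n) ^ 2 * σRD2 n)))) := by
  intro k
  have hπ : (0:ℝ) < π := Real.pi_pos
  have hπ2 : (1:ℝ) < π / 2 := by nlinarith [Real.pi_gt_three]
  have hne : (Finset.univ : Finset (Fin K)).Nonempty := by
    have : Nonempty (Fin K) := Fin.pos_iff_nonempty.mp hK
    exact Finset.univ_nonempty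
  set S : ℝ := ∑ n, (σSR2 n) ^ 2 * σRD2 n with hSdef
  set Sp : ℝ := ∑ n, pS n * (σSR2 n) ^ 2 * σRD2 n with hSpdef
  set T0 : ℝ := ∑ n, σSR2 n * σRD2 n with hT0def
  set SB : ℝ := ∑ n, pS n * βSR n with hSBdef
  set Ca : ℝ := ∑ i ∈ univ.filter (· ≠ k), pS i * ((σSR2 i) ^ 2 * σRD2 i)
    with hCadef
  set Cb : ℝ := ∑ i ∈ univ.filter (· ≠ k), pS i * βSR i with hCbdef
  have hSpos : 0 < S := by
    rw [hSdef]
    exact Finset.sum_pos (fun i _ => by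
      have := hσSR i; have := hσRD i; positivity) hne
  have hT0pos : 0 < T0 := by
    rw [hT0def]
    exact Finset.sum_pos (fun i _ => by
      have := hσSR i; have := hσRD i; positivity) hne
  have hSp : Sp = pSv * S := by
    rw [hSpdef, hSdef, Finset.mul_sum]
    exact Finset.sum_congr rfl fun n _ => by rw [hpS]; ring
  have hSppos : 0 < Sp := by rw [hSp]; positivity
  have hSBnn : 0 ≤ SB := by
    rw [hSBdef]
    exact Finset.sum_nonneg fun i _ => by
      have h1 := hβSR i; rw [hpS]; positivity
  have hCann : 0 ≤ Ca := by
    rw [hCadef]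
    exact Finset.sum_nonneg fun i _ => by
      have h1 := hσSR i; have h2 := hσRD i; rw [hpS]; positivity
  have hCbnn : 0 ≤ Cb := by
    rw [hCbdef]
    exact Finset.sum_nonneg fun i _ => by
      have h1 := hβSR i; rw [hpS]; positivity
  set t1 : ℝ := (σRD2 k) ^ 2 * σSR2 k with ht1def
  set t0 : ℝ := βRD k * T0 with ht0def
  set c : ℝ := π / (2 * ER) * Sp with hcdef
  set C1 : ℝ := pS k * ((σSR2 k) ^ 2 * σRD2 k * βRD k + βSR k * t1) +
      (βRD k * Ca + t1 * Cb) + t1 + (π / 2 - 1) * (1 + SB) * t1 +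
      βRD k * (π / 2 - 1) * Sp + π ^ 2 / (4 * ER) * (1 + SB) * T0 with hC1def
  set C2 : ℝ := pS k * βSR k * t0 + t0 * Cb + t0 + (π / 2 - 1) * (1 + SB) * t0 +
      βRD k * (π / 2) * (π / 2 - 1) * (1 + SB) * T0 with hC2def
  set a : ℝ := pS k * (σSR2 k) ^ 2 * (σRD2 k) ^ 2 with hadef
  clear_value t1 t0 c C1 C2 a
  have hcpos : 0 < c := by rw [hcdef]; positivity
  -- split the interference sum
  have hCsplit : ∀ M : ℕ, C M k =
      (M : ℝ) ^ 2 * ((M : ℝ) * (βRD k * Ca) + t M k * Cb) := by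
    intro M
    rw [hC]
    congr 1
    rw [hCadef, hCbdef]
    simp only [Finset.mul_sum, ← Finset.sum_add_distrib]
    exact Finset.sum_congr rfl fun i _ => by ring
  -- the denominator identity
  have hden : ∀ M : ℕ, 1 ≤ M →
      B M k + C M k + D M k + E M k + F M k + G M k =
      (c + C1 * ((M : ℝ))⁻¹ + C2 * ((M : ℝ))⁻¹ ^ 2) * (M : ℝ) ^ 4 := by
    intro M hM
    have hM0 : (M : ℝ) ≠ 0 := Nat.cast_ne_zero.mpr (by omega)
    rw [hB, hCsplit, hD, hE, hF, hG, ht, hpR, hcdef, hC1def, hC2def, ht1def,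
      ht0def]
    field_simp
    ring
  -- limit of the rescaled denominator
  have hu : Tendsto (fun M : ℕ => ((M : ℝ))⁻¹) atTop (nhds 0) :=
    tendsto_inv_atTop_zero.comp tendsto_natCast_atTop_atTop
  have hdenlim : Tendsto
      (fun M : ℕ => c + C1 * ((M : ℝ))⁻¹ + C2 * ((M : ℝ))⁻¹ ^ 2)
      atTop (nhds c) := by
    have h1 := (hu.const_mul C1)
    have h2 := ((hu.pow 2).const_mul C2)
    have h3 := ((tendsto_const_nhds (x := c) (f := atTop)).add h1).add h2
    have h4 : c + C1 * 0 + C2 * 0 ^ 2 = c := by ring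
    rw [h4] at h3
    exact h3
  -- limit of the SINR
  have heq : (fun M : ℕ =>
      A M k / (B M k + C M k + D M k + E M k + F M k + G M k)) =ᶠ[atTop]
      (fun M : ℕ => a / (c + C1 * ((M : ℝ))⁻¹ + C2 * ((M : ℝ))⁻¹ ^ 2)) := by
    filter_upwards [eventually_ge_atTop 1] with M hM
    have hM0 : ((M : ℝ)) ^ 4 ≠ 0 := by
      have : (M : ℝ) ≠ 0 := Nat.cast_ne_zero.mpr (by omega)
      positivity
    rw [hA, hden M hM, hadef,
      show pS k * (M : ℝ) ^ 4 * (σSR2 k) ^ 2 * (σRD2 k) ^ 2 =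
        pS k * (σSR2 k) ^ 2 * (σRD2 k) ^ 2 * (M : ℝ) ^ 4 from by ring,
      mul_div_mul_right _ _ hM0]
  have hratio : Tendsto
      (fun M : ℕ => A M k / (B M k + C M k + D M k + E M k + F M k + G M k))
      atTop (nhds (a / c)) :=
    Filter.Tendsto.congr' heq.symm (tendsto_const_nhds.div hdenlim hcpos.ne')
  -- identify the limit value
  have hval : a / c = 2 * ER / π * ((σSR2 k) ^ 2 * (σRD2 k) ^ 2 / S) := by
    rw [hadef, hcdef, hSp, hpS]
    field_simp
  rw [hval] at hratio
  set L : ℝ := 2 * ER / π * ((σSR2 k) ^ 2 * (σRD2 k) ^ 2 / S) with hLdef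
  clear_value L
  have hLpos : 0 < L := by
    rw [hLdef]
    have h1 := hσSR k; have h2 := hσRD k
    exact mul_pos (by positivity) (div_pos (by positivity) hSpos)
  have hlog : Tendsto
      (fun M : ℕ => Real.logb 2
        (1 + A M k / (B M k + C M k + D M k + E M k + F M k + G M k)))
      atTop (nhds (Real.logb 2 (1 + L))) := by
    have h1 : Tendsto
        (fun M : ℕ => 1 + A M k /
          (B M k + C M k + D M k + E M k + F M k + G M k))
        atTop (nhds (1 + L)) := tendsto_const_nhds.add hratio
    have h2 := h1.log (by positivity)
    simpa [Real.logb, div_eq_mul_inv] using h2.div_const (Real.log 2)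
  simp only [hR]
  exact hlog.const_mul _
end

section
/- Fix E_R > 0, a common source power p_S > 0 (p_{S,i} = p_S for all i), and set the relay power p_R = E_R/M (all other parameters fixed, independent of M). Then, as M → ∞ along the natural numbers, the unquantized rate converges: R^p_k(M) → ((τ_c − 2τ_p)/(2τ_c))·log₂(1 + E_R·σ̂⁴_{SR,k}σ̂⁴_{RD,k} / Σ_{n=1}^K σ̂⁴_{SR,n}σ̂²_{RD,n}). -/
open Real Finset Filter

/-- Power-scaling law at the relay for the unquantized system: with common source
power `p_S` and relay power `p_R = E_R/M`, the perfect-ADC/perfect-DAC rate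
`R^p_k(M)` converges, as `M → ∞`, to
`((τc − 2τp)/(2τc))·log₂(1 + E_R·σ̂⁴_{SR,k}σ̂⁴_{RD,k} / Σ_n σ̂⁴_{SR,n}σ̂²_{RD,n})`. -/
theorem unquantized_rate_relay_power_scaling_limit
    (K : ℕ) (hK : 1 ≤ K)
    (τc τp ER pSv : ℝ) (hτp : 0 < τp) (hτc : 2 * τp < τc) (hER : 0 < ER)
    (hpSv : 0 < pSv)
    (βSR βRD σhSR2 σhRD2 : Fin K → ℝ)
    (hβSR : ∀ i, 0 < βSR i) (hβRD : ∀ i, 0 < βRD i)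
    (hσhSR : ∀ i, 0 < σhSR2 i) (hσhRD : ∀ i, 0 < σhRD2 i)
    (pS : Fin K → ℝ) (hpS : ∀ i, pS i = pSv)
    (pR : ℕ → ℝ) (hpR : ∀ M, pR M = ER / M)
    (th Ah Bh Ch Dh : ℕ → Fin K → ℝ) (αd γ2 : ℕ → ℝ) (Rp : ℕ → Fin K → ℝ)
    (hth : ∀ M k, th M k =
      M * (σhRD2 k) ^ 2 * σhSR2 k + βRD k * ∑ n, σhSR2 n * σhRD2 n)
    (hAh : ∀ M k, Ah M k = pS k * (M : ℝ) ^ 4 * (σhSR2 k) ^ 2 * (σhRD2 k) ^ 2)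
    (hBh : ∀ M k, Bh M k = pS k * (M : ℝ) ^ 2 *
      (M * (σhSR2 k) ^ 2 * σhRD2 k * βRD k + βSR k * th M k))
    (hCh : ∀ M k, Ch M k = (M : ℝ) ^ 2 * ∑ i ∈ univ.filter (· ≠ k),
      pS i * (M * (σhSR2 i) ^ 2 * σhRD2 i * βRD k + βSR i * th M k))
    (hDh : ∀ M k, Dh M k = (M : ℝ) ^ 2 * th M k)
    (hαd : ∀ M : ℕ, αd M = M * (∑ n, σhSR2 n * σhRD2 n) +
      M * ∑ n, σhSR2 n * σhRD2 n * (M * pS n * σhSR2 n + ∑ i, pS i * βSR i))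
    (hγ2 : ∀ M : ℕ, γ2 M = pR M / M)
    (hRp : ∀ M k, Rp M k = ((τc - 2 * τp) / (2 * τc)) *
      Real.logb 2 (1 + Ah M k / (Bh M k + Ch M k + Dh M k + αd M / γ2 M))) :
    ∀ k, Tendsto (fun M : ℕ => Rp M k) atTop
      (nhds (((τc - 2 * τp) / (2 * τc)) *
        Real.logb 2 (1 + ER * ((σhSR2 k) ^ 2 * (σhRD2 k) ^ 2 /
          ∑ n, (σhSR2 n) ^ 2 * σhRD2 n)))) := by
  intro k
  haveI : Nonempty (Fin K) := ⟨⟨0, hK⟩⟩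
  set S : ℝ := ∑ n, σhSR2 n * σhRD2 n with hS
  set S2 : ℝ := ∑ n, (σhSR2 n) ^ 2 * σhRD2 n with hS2def
  set C2 : ℝ := ∑ i, pS i * βSR i with hC2
  set P : ℝ := ∑ i ∈ univ.filter (· ≠ k), pS i * ((σhSR2 i) ^ 2 * σhRD2 i) with hPdef
  set Q : ℝ := ∑ i ∈ univ.filter (· ≠ k), pS i * βSR i with hQdef
  set u : ℝ := (σhRD2 k) ^ 2 * σhSR2 k with hu
  set v : ℝ := βRD k * S with hv
  set w : ℝ := (σhSR2 k) ^ 2 * σhRD2 k * βRD k with hw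
  set A0 : ℝ := pSv * (σhSR2 k) ^ 2 * (σhRD2 k) ^ 2 with hA0
  have hS2 : 0 < S2 := by
    exact Finset.sum_pos (fun i _ => mul_pos (pow_pos (hσhSR i) 2) (hσhRD i))
      Finset.univ_nonempty
  set Dfun : ℝ → ℝ := fun x =>
    pSv * (x * w + βSR k * (x * u + x ^ 2 * v)) +
      (x * βRD k * P + Q * (x * u + x ^ 2 * v)) + (x * u + x ^ 2 * v) +
      (x * S + pSv * S2 + x * S * C2) / ER with hDfun
  have hD0 : Dfun 0 = pSv * S2 / ER := by simp [hDfun]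
  have hD0ne : Dfun 0 ≠ 0 := by
    rw [hD0]; exact ne_of_gt (div_pos (mul_pos hpSv hS2) hER)
  set L : ℝ := ER * ((σhSR2 k) ^ 2 * (σhRD2 k) ^ 2 / S2) with hL
  have hL0 : A0 / Dfun 0 = L := by
    rw [hD0, hL, hA0]
    field_simp
  have hcont : Continuous Dfun := by
    unfold Dfun; fun_prop
  have hinv : Tendsto (fun M : ℕ => ((M : ℝ))⁻¹) atTop (nhds 0) :=
    tendsto_inv_atTop_nhds_zero_nat
  have hDtend : Tendsto (fun M : ℕ => Dfun ((M : ℝ))⁻¹) atTop (nhds (Dfun 0)) :=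
    (hcont.tendsto 0).comp hinv
  have hg : Tendsto (fun M : ℕ => A0 / Dfun ((M : ℝ))⁻¹) atTop (nhds L) := by
    rw [← hL0]
    exact tendsto_const_nhds.div hDtend hD0ne
  have hLpos : 0 < L := by
    rw [hL]
    exact mul_pos hER (div_pos (mul_pos (pow_pos (hσhSR k) 2) (pow_pos (hσhRD k) 2)) hS2)
  -- eventual equality of SINR
  have hev : ∀ᶠ M : ℕ in atTop,
      Ah M k / (Bh M k + Ch M k + Dh M k + αd M / γ2 M)
        = A0 / Dfun ((M : ℝ))⁻¹ := by
    filter_upwards [eventually_ge_atTop 1] with M hM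
    have hMpos : (0 : ℝ) < (M : ℝ) := by exact_mod_cast hM
    have hMne : (M : ℝ) ≠ 0 := ne_of_gt hMpos
    set Mr : ℝ := (M : ℝ) with hMr
    have hth' : th M k = Mr * u + v := by rw [hth]; simp [hu, hv, hS]; ring
    have hCsum : ∑ i ∈ univ.filter (· ≠ k),
        pS i * (Mr * (σhSR2 i) ^ 2 * σhRD2 i * βRD k + βSR i * th M k)
        = Mr * βRD k * P + th M k * Q := by
      rw [hPdef, hQdef, Finset.mul_sum, Finset.mul_sum, ← Finset.sum_add_distrib]
      apply Finset.sum_congr rfl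
      intros; ring
    have hαsum : ∑ n, σhSR2 n * σhRD2 n * (Mr * pS n * σhSR2 n + C2)
        = Mr * pSv * S2 + S * C2 := by
      have hterm : ∀ n : Fin K, σhSR2 n * σhRD2 n * (Mr * pS n * σhSR2 n + C2)
          = Mr * pSv * ((σhSR2 n) ^ 2 * σhRD2 n) + σhSR2 n * σhRD2 n * C2 := by
        intro n; rw [hpS n]; ring
      rw [Finset.sum_congr rfl (fun n _ => hterm n), Finset.sum_add_distrib,
        ← Finset.mul_sum, ← Finset.sum_mul, ← hS2def, ← hS]
    have hαd' : αd M = Mr * S + Mr * (Mr * pSv * S2 + S * C2) := by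
      rw [hαd, ← hMr, hαsum]
    have hγ2' : γ2 M = ER / Mr ^ 2 := by
      rw [hγ2, hpR, div_div, ← hMr, ← pow_two]
    have hden : Bh M k + Ch M k + Dh M k + αd M / γ2 M
        = Mr ^ 4 * Dfun (Mr⁻¹) := by
      rw [hBh, hCh, hDh, hCsum, hαd', hγ2', hth', hpS k, hDfun]
      field_simp
      ring
    have hAh' : Ah M k = Mr ^ 4 * A0 := by
      rw [hAh, hpS k, hA0]; ring
    rw [hAh', hden, mul_div_mul_left _ _ (by positivity : Mr ^ 4 ≠ 0)]
  have hsinr : Tendsto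
      (fun M : ℕ => Ah M k / (Bh M k + Ch M k + Dh M k + αd M / γ2 M))
      atTop (nhds L) := Tendsto.congr' (hev.mono fun M h => h.symm) hg
  have h1L : (0 : ℝ) < 1 + L := by linarith
  have hlog : Tendsto
      (fun M : ℕ => Real.logb 2
        (1 + Ah M k / (Bh M k + Ch M k + Dh M k + αd M / γ2 M)))
      atTop (nhds (Real.logb 2 (1 + L))) := by
    have h1 : Tendsto (fun M : ℕ =>
        1 + Ah M k / (Bh M k + Ch M k + Dh M k + αd M / γ2 M)) atTop
        (nhds (1 + L)) := tendsto_const_nhds.add hsinr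
    have h2 := (Real.continuousAt_log (ne_of_gt h1L)).tendsto.comp h1
    simpa [Real.logb, Function.comp] using h2.div_const (Real.log 2)
  have := hlog.const_mul ((τc - 2 * τp) / (2 * τc))
  refine Tendsto.congr (fun M => (hRp M k).symm) ?_
  simpa [hL, hS2def] using this
end

section
/- Fix E_R > 0, a common source power p_S > 0 (p_{S,i} = p_S for all i), and set the relay power p_R = E_R/M (all other parameters fixed, independent of M). Then, as M → ∞ along the natural numbers, the perfect-ADC/one-bit-DAC rate converges: R^{pA}_k(M) → ((τ_c − 2τ_p)/(2τ_c))·log₂(1 + (2/π)·E_R·σ̂⁴_{SR,k}σ̂⁴_{RD,k} / Σ_{n=1}^K σ̂⁴_{SR,n}σ̂²_{RD,n}). -/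
open Real Finset Filter

/-- Power-scaling law at the relay for the unquantized system: with common source
power `p_S` and relay power `p_R = E_R/M`, the perfect-ADC/one-bit-DAC rate
`R^{pA}_k(M)` converges, as `M → ∞`, to
`((τc − 2τp)/(2τc))·log₂(1 + (2/π)·E_R·σ̂⁴_{SR,k}σ̂⁴_{RD,k} / Σ_n σ̂⁴_{SR,n}σ̂²_{RD,n})`. -/
theorem perfectADC_onebitDAC_rate_relay_power_scaling_limit
    (K : ℕ) (hK : 1 ≤ K)
    (τc τp ER pSv : ℝ) (hτp : 0 < τp) (hτc : 2 * τp < τc) (hER : 0 < ER)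
    (hpSv : 0 < pSv)
    (βSR βRD σhSR2 σhRD2 : Fin K → ℝ)
    (hβSR : ∀ i, 0 < βSR i) (hβRD : ∀ i, 0 < βRD i)
    (hσhSR : ∀ i, 0 < σhSR2 i) (hσhRD : ∀ i, 0 < σhRD2 i)
    (pS : Fin K → ℝ) (hpS : ∀ i, pS i = pSv)
    (pR : ℕ → ℝ) (hpR : ∀ M, pR M = ER / M)
    (th Ah Bh Ch Dh : ℕ → Fin K → ℝ) (αd γ2 : ℕ → ℝ) (RpA : ℕ → Fin K → ℝ)
    (hth : ∀ M k, th M k =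
      M * (σhRD2 k) ^ 2 * σhSR2 k + βRD k * ∑ n, σhSR2 n * σhRD2 n)
    (hAh : ∀ M k, Ah M k = pS k * (M : ℝ) ^ 4 * (σhSR2 k) ^ 2 * (σhRD2 k) ^ 2)
    (hBh : ∀ M k, Bh M k = pS k * (M : ℝ) ^ 2 *
      (M * (σhSR2 k) ^ 2 * σhRD2 k * βRD k + βSR k * th M k))
    (hCh : ∀ M k, Ch M k = (M : ℝ) ^ 2 * ∑ i ∈ univ.filter (· ≠ k),
      pS i * (M * (σhSR2 i) ^ 2 * σhRD2 i * βRD k + βSR i * th M k))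
    (hDh : ∀ M k, Dh M k = (M : ℝ) ^ 2 * th M k)
    (hαd : ∀ M : ℕ, αd M = M * (∑ n, σhSR2 n * σhRD2 n) +
      M * ∑ n, σhSR2 n * σhRD2 n * (M * pS n * σhSR2 n + ∑ i, pS i * βSR i))
    (hγ2 : ∀ M : ℕ, γ2 M = pR M / M)
    (hRpA : ∀ M k, RpA M k = ((τc - 2 * τp) / (2 * τc)) *
      Real.logb 2 (1 + Ah M k / (Bh M k + Ch M k + Dh M k +
        (π / 2 - 1) * M * βRD k * αd M + (π / 2) * αd M / γ2 M))) :
    ∀ k, Tendsto (fun M : ℕ => RpA M k) atTop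
      (nhds (((τc - 2 * τp) / (2 * τc)) *
        Real.logb 2 (1 + (2 / π) * ER * ((σhSR2 k) ^ 2 * (σhRD2 k) ^ 2 /
          ∑ n, (σhSR2 n) ^ 2 * σhRD2 n)))) := by
  intro k
  have hKpos : 0 < K := hK
  haveI : Nonempty (Fin K) := Fin.pos_iff_nonempty.mp hKpos
  have hπ : (0:ℝ) < π := Real.pi_pos
  set S1 : ℝ := ∑ n, σhSR2 n * σhRD2 n with hS1def
  set S : ℝ := ∑ n, (σhSR2 n) ^ 2 * σhRD2 n with hSdef
  set P : ℝ := ∑ i, pS i * βSR i with hPdef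
  set Q1 : ℝ := ∑ i ∈ univ.filter (· ≠ k), pS i * ((σhSR2 i) ^ 2 * σhRD2 i * βRD k) with hQ1def
  set Q2 : ℝ := ∑ i ∈ univ.filter (· ≠ k), pS i * βSR i with hQ2def
  set c1 : ℝ := (σhRD2 k) ^ 2 * σhSR2 k with hc1def
  set c2 : ℝ := βRD k * S1 with hc2def
  set a : ℝ := pSv * ((σhSR2 k) ^ 2 * (σhRD2 k) ^ 2) with hadef
  set G : ℝ → ℝ := fun x =>
      pSv * ((σhSR2 k) ^ 2 * σhRD2 k * βRD k * x + βSR k * (c1 * x + c2 * x ^ 2))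
    + (Q1 * x + (c1 * x + c2 * x ^ 2) * Q2)
    + (c1 * x + c2 * x ^ 2)
    + (π / 2 - 1) * βRD k * x * (x * S1 + pSv * S + x * P * S1)
    + (π / 2) * (x * S1 + pSv * S + x * P * S1) * ER⁻¹ with hGdef
  have hS : 0 < S := by
    exact Finset.sum_pos (fun i _ => mul_pos (pow_pos (hσhSR i) 2) (hσhRD i)) Finset.univ_nonempty
  have hG0 : G 0 = π / 2 * (pSv * S) * ER⁻¹ := by simp [hGdef]
  have hG0pos : 0 < G 0 := by rw [hG0]; positivity
  have hGcont : Continuous G := by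
    simp only [hGdef]; fun_prop
  have hL : a / G 0 = (2 / π) * ER * ((σhSR2 k) ^ 2 * (σhRD2 k) ^ 2 /
      ∑ n, (σhSR2 n) ^ 2 * σhRD2 n) := by
    rw [hG0, hadef, ← hSdef]
    field_simp
  -- limit of the inner ratio
  have hx : Tendsto (fun M : ℕ => ((M:ℝ))⁻¹) atTop (nhds 0) :=
    tendsto_inv_atTop_nhds_zero_nat
  have hdiv : Tendsto (fun M : ℕ => a / G ((M:ℝ)⁻¹)) atTop (nhds (a / G 0)) := by
    have : ContinuousAt (fun y => a / G y) 0 :=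
      (continuousAt_const).div hGcont.continuousAt hG0pos.ne'
    exact this.tendsto.comp hx
  have heq : ∀ᶠ M : ℕ in atTop, a / G ((M:ℝ)⁻¹) =
      Ah M k / (Bh M k + Ch M k + Dh M k +
        (π / 2 - 1) * M * βRD k * αd M + (π / 2) * αd M / γ2 M) := by
    filter_upwards [eventually_ge_atTop 1] with M hM1
    have hM : (M:ℝ) ≠ 0 := Nat.cast_ne_zero.mpr (by omega)
    have hAh' : Ah M k = a * (M:ℝ) ^ 4 := by rw [hAh, hpS, hadef]; ring
    have hsumC : ∑ i ∈ univ.filter (· ≠ k),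
        pS i * ((M:ℝ) * (σhSR2 i) ^ 2 * σhRD2 i * βRD k + βSR i * th M k)
        = (M:ℝ) * Q1 + th M k * Q2 := by
      rw [hQ1def, hQ2def, Finset.mul_sum, Finset.mul_sum, ← Finset.sum_add_distrib]
      exact Finset.sum_congr rfl fun i _ => by ring
    have hsumα : ∑ n, σhSR2 n * σhRD2 n * ((M:ℝ) * pS n * σhSR2 n + P)
        = (M:ℝ) * pSv * S + P * S1 := by
      rw [hSdef, hS1def, Finset.mul_sum, Finset.mul_sum, ← Finset.sum_add_distrib]
      exact Finset.sum_congr rfl fun n _ => by rw [hpS]; ring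
    have hαd' : αd M = (M:ℝ) * S1 + (M:ℝ) * ((M:ℝ) * pSv * S + P * S1) := by
      rw [hαd, hsumα]
    have hth' : th M k = (M:ℝ) * c1 + c2 := by
      rw [hth, hc1def, hc2def]; ring
    have hγ2' : γ2 M = ER / (M:ℝ) / (M:ℝ) := by rw [hγ2, hpR]
    have hden : Bh M k + Ch M k + Dh M k +
        (π / 2 - 1) * M * βRD k * αd M + (π / 2) * αd M / γ2 M
        = G ((M:ℝ)⁻¹) * (M:ℝ) ^ 4 := by
      rw [hBh, hpS, hCh, hsumC, hDh, hαd', hth', hγ2', hGdef]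
      field_simp
      ring
    rw [hAh', hden, mul_comm (G ((M:ℝ)⁻¹)) ((M:ℝ) ^ 4), mul_comm a ((M:ℝ) ^ 4),
      mul_div_mul_left _ _ (pow_ne_zero 4 hM)]
  have hinner : Tendsto (fun M : ℕ => 1 + Ah M k / (Bh M k + Ch M k + Dh M k +
      (π / 2 - 1) * M * βRD k * αd M + (π / 2) * αd M / γ2 M)) atTop
      (nhds (1 + a / G 0)) := by
    exact tendsto_const_nhds.add (hdiv.congr' heq)
  have hposlim : 0 < 1 + a / G 0 := by
    have : 0 ≤ a / G 0 := div_nonneg (by rw [hadef]; positivity) hG0pos.le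
    linarith
  have hlog : Tendsto (fun M : ℕ => Real.logb 2 (1 + Ah M k / (Bh M k + Ch M k + Dh M k +
      (π / 2 - 1) * M * βRD k * αd M + (π / 2) * αd M / γ2 M))) atTop
      (nhds (Real.logb 2 (1 + a / G 0))) :=
    (Real.continuousAt_logb hposlim.ne').tendsto.comp hinner
  have := hlog.const_mul ((τc - 2 * τp) / (2 * τc))
  rw [hL] at this
  exact this.congr fun M => (hRpA M k).symm
end

section
/- Let Z₁ and Z₂ be independent real standard Gaussian random variables (mean 0, variance 1) on a probability space, let ρ ∈ [−1, 1], and set W = ρ·Z₁ + √(1 − ρ²)·Z₂. Then E[sign(Z₁)·sign(W)] = (2/π)·arcsin(ρ). -/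
open MeasureTheory ProbabilityTheory Real
open scoped ENNReal NNReal

section Aux

lemma measurable_realSign : Measurable Real.sign := by
  have : Real.sign = fun r : ℝ => if r < 0 then (-1 : ℝ) else if 0 < r then 1 else 0 := by
    funext r; rfl
  rw [this]
  exact Measurable.ite (measurableSet_lt measurable_id measurable_const) measurable_const
    (Measurable.ite (measurableSet_lt measurable_const measurable_id) measurable_const
      measurable_const)

lemma abs_realSign_le_one (x : ℝ) : |Real.sign x| ≤ 1 := by
  rcases lt_trichotomy x 0 with h | h | h
  · rw [Real.sign_of_neg h]; norm_num
  · subst h; rw [Real.sign_zero]; norm_num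
  · rw [Real.sign_of_pos h]; norm_num

lemma realSign_mul_of_pos {r : ℝ} (hr : 0 < r) (a : ℝ) :
    Real.sign (r * a) = Real.sign a := by
  rcases lt_trichotomy a 0 with h | h | h
  · rw [Real.sign_of_neg h, Real.sign_of_neg (mul_neg_of_pos_of_neg hr h)]
  · subst h; simp
  · rw [Real.sign_of_pos h, Real.sign_of_pos (mul_pos hr h)]

/-- A measurable function bounded by 1 is interval integrable. -/
lemma intervalIntegrable_of_bounded {f : ℝ → ℝ} (hf : Measurable f)
    (hb : ∀ x, |f x| ≤ 1) (a b : ℝ) : IntervalIntegrable f volume a b := by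
  rw [intervalIntegrable_iff]
  refine Integrable.mono' (g := fun _ => (1 : ℝ))
    (integrableOn_const measure_Ioc_lt_top.ne enorm_ne_top)
    hf.aestronglyMeasurable (ae_of_all _ fun x => ?_)
  simpa using hb x

/-- Integral of a function that is constant on the open interval. -/
lemma integral_eq_of_constant_on_Ioo {g : ℝ → ℝ} {a b c : ℝ} (hab : a ≤ b)
    (h : ∀ θ ∈ Set.Ioo a b, g θ = c) : ∫ θ in a..b, g θ = (b - a) * c := by
  rw [intervalIntegral.integral_of_le hab, integral_Ioc_eq_integral_Ioo,
    setIntegral_congr_fun measurableSet_Ioo h]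
  simp [Real.volume_Ioo, ENNReal.toReal_ofReal (sub_nonneg.mpr hab), hab]

/-- The angular integral, for `0 ≤ α ≤ π/2`. -/
lemma angular_integral_nonneg {α : ℝ} (h0 : 0 ≤ α) (h1 : α ≤ π / 2) :
    ∫ θ in (-π)..π, Real.sign (Real.cos θ) * Real.sign (Real.sin (θ + α)) = 4 * α := by
  have hπ : 0 < π := Real.pi_pos
  set g : ℝ → ℝ := fun θ => Real.sign (Real.cos θ) * Real.sign (Real.sin (θ + α)) with hg
  have hgm : Measurable g :=
    (measurable_realSign.comp Real.measurable_cos).mul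
      (measurable_realSign.comp (Real.measurable_sin.comp (measurable_id.add_const α)))
  have hgb : ∀ x, |g x| ≤ 1 := by
    intro x
    rw [abs_mul]
    calc |Real.sign (Real.cos x)| * |Real.sign (Real.sin (x + α))| ≤ 1 * 1 :=
          mul_le_mul (abs_realSign_le_one _) (abs_realSign_le_one _) (abs_nonneg _)
            zero_le_one
      _ = 1 := one_mul 1
  have hii : ∀ a b : ℝ, IntervalIntegrable g volume a b :=
    intervalIntegrable_of_bounded hgm hgb
  -- split points: -π, -π/2, -α, π/2, π - α, π
  have s1 : ∫ θ in (-π)..(-(π/2)), g θ = (-(π/2) - (-π)) * 1 := by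
    refine integral_eq_of_constant_on_Ioo (by linarith) fun θ hθ => ?_
    obtain ⟨hθ1, hθ2⟩ := hθ
    have hcos : Real.cos θ < 0 := by
      rw [← Real.cos_neg]
      exact Real.cos_neg_of_pi_div_two_lt_of_lt (by linarith) (by linarith)
    have hsin : Real.sin (θ + α) < 0 :=
      Real.sin_neg_of_neg_of_neg_pi_lt (by linarith) (by linarith)
    rw [hg]; simp only
    rw [Real.sign_of_neg hcos, Real.sign_of_neg hsin]; ring
  have s2 : ∫ θ in (-(π/2))..(-α), g θ = (-α - (-(π/2))) * (-1) := by
    refine integral_eq_of_constant_on_Ioo (by linarith) fun θ hθ => ?_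
    obtain ⟨hθ1, hθ2⟩ := hθ
    have hcos : 0 < Real.cos θ := Real.cos_pos_of_mem_Ioo ⟨by linarith, by linarith⟩
    have hsin : Real.sin (θ + α) < 0 :=
      Real.sin_neg_of_neg_of_neg_pi_lt (by linarith) (by linarith)
    rw [hg]; simp only
    rw [Real.sign_of_pos hcos, Real.sign_of_neg hsin]; ring
  have s3 : ∫ θ in (-α)..(π/2), g θ = (π/2 - (-α)) * 1 := by
    refine integral_eq_of_constant_on_Ioo (by linarith) fun θ hθ => ?_
    obtain ⟨hθ1, hθ2⟩ := hθ
    have hcos : 0 < Real.cos θ := Real.cos_pos_of_mem_Ioo ⟨by linarith, by linarith⟩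
    have hsin : 0 < Real.sin (θ + α) :=
      Real.sin_pos_of_pos_of_lt_pi (by linarith) (by linarith)
    rw [hg]; simp only
    rw [Real.sign_of_pos hcos, Real.sign_of_pos hsin]; ring
  have s4 : ∫ θ in (π/2)..(π - α), g θ = ((π - α) - π/2) * (-1) := by
    refine integral_eq_of_constant_on_Ioo (by linarith) fun θ hθ => ?_
    obtain ⟨hθ1, hθ2⟩ := hθ
    have hcos : Real.cos θ < 0 :=
      Real.cos_neg_of_pi_div_two_lt_of_lt (by linarith) (by linarith)
    have hsin : 0 < Real.sin (θ + α) :=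
      Real.sin_pos_of_pos_of_lt_pi (by linarith) (by linarith)
    rw [hg]; simp only
    rw [Real.sign_of_neg hcos, Real.sign_of_pos hsin]; ring
  have s5 : ∫ θ in (π - α)..π, g θ = (π - (π - α)) * 1 := by
    refine integral_eq_of_constant_on_Ioo (by linarith) fun θ hθ => ?_
    obtain ⟨hθ1, hθ2⟩ := hθ
    have hcos : Real.cos θ < 0 :=
      Real.cos_neg_of_pi_div_two_lt_of_lt (by linarith) (by linarith)
    have hsin : Real.sin (θ + α) < 0 := by
      have h' : 0 < Real.sin (θ + α - π) :=
        Real.sin_pos_of_pos_of_lt_pi (by linarith) (by linarith)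
      rw [Real.sin_sub_pi] at h'
      linarith
    rw [hg]; simp only
    rw [Real.sign_of_neg hcos, Real.sign_of_neg hsin]; ring
  have a1 : ∫ θ in (-π)..(-α), g θ = (∫ θ in (-π)..(-(π/2)), g θ) + ∫ θ in (-(π/2))..(-α), g θ :=
    (intervalIntegral.integral_add_adjacent_intervals (hii _ _) (hii _ _)).symm
  have a2 : ∫ θ in (-π)..(π/2), g θ = (∫ θ in (-π)..(-α), g θ) + ∫ θ in (-α)..(π/2), g θ :=
    (intervalIntegral.integral_add_adjacent_intervals (hii _ _) (hii _ _)).symm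
  have a3 : ∫ θ in (-π)..(π - α), g θ = (∫ θ in (-π)..(π/2), g θ) + ∫ θ in (π/2)..(π - α), g θ :=
    (intervalIntegral.integral_add_adjacent_intervals (hii _ _) (hii _ _)).symm
  have a4 : ∫ θ in (-π)..π, g θ = (∫ θ in (-π)..(π - α), g θ) + ∫ θ in (π - α)..π, g θ :=
    (intervalIntegral.integral_add_adjacent_intervals (hii _ _) (hii _ _)).symm
  rw [a4, a3, a2, a1, s1, s2, s3, s4, s5]
  ring

/-- The angular integral, general case `-π/2 ≤ α ≤ π/2`. -/
lemma angular_integral {α : ℝ} (h0 : -(π / 2) ≤ α) (h1 : α ≤ π / 2) :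
    ∫ θ in (-π)..π, Real.sign (Real.cos θ) * Real.sign (Real.sin (θ + α)) = 4 * α := by
  rcases le_or_gt 0 α with h | h
  · exact angular_integral_nonneg h h1
  · have key : ∀ θ : ℝ, Real.sign (Real.cos θ) * Real.sign (Real.sin (θ + α)) =
        (fun u => -(Real.sign (Real.cos u) * Real.sign (Real.sin (u + -α)))) (-θ) := by
      intro θ
      simp only [Real.cos_neg]
      have : (-θ) + -α = -(θ + α) := by ring
      rw [this, Real.sin_neg, Real.sign_neg]
      ring
    simp_rw [key]
    rw [intervalIntegral.integral_comp_neg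
      (fun u => -(Real.sign (Real.cos u) * Real.sign (Real.sin (u + -α)))), neg_neg,
      intervalIntegral.integral_neg, angular_integral_nonneg (by linarith) (by linarith)]
    ring

/-- Radial integral. -/
lemma radial_integral : ∫ r in Set.Ioi (0 : ℝ), r * Real.exp (-(r ^ 2) / 2) = 1 := by
  have hderiv : ∀ x ∈ Set.Ioi (0 : ℝ),
      HasDerivAt (fun r : ℝ => -Real.exp (-(r ^ 2) / 2)) (x * Real.exp (-(x ^ 2) / 2)) x := by
    intro x _
    have h1 : HasDerivAt (fun r : ℝ => -(r ^ 2) / 2) (-x) x := by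
      have := ((hasDerivAt_pow 2 x).neg).div_const 2
      refine this.congr_deriv ?_
      simp; ring
    have h2 := (Real.hasDerivAt_exp (-(x ^ 2) / 2)).comp x h1
    have h3 := h2.neg
    refine h3.congr_deriv ?_
    ring
  have hpos : ∀ x ∈ Set.Ioi (0 : ℝ), 0 ≤ x * Real.exp (-(x ^ 2) / 2) := fun x hx =>
    mul_nonneg (le_of_lt hx) (Real.exp_nonneg _)
  have htends : Filter.Tendsto (fun r : ℝ => -Real.exp (-(r ^ 2) / 2)) Filter.atTop (nhds 0) := by
    have h1 : Filter.Tendsto (fun r : ℝ => r ^ 2) Filter.atTop Filter.atTop :=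
      Filter.tendsto_pow_atTop two_ne_zero
    have h2 : Filter.Tendsto (fun r : ℝ => -(r ^ 2)) Filter.atTop Filter.atBot :=
      Filter.tendsto_neg_atBot_iff.mpr h1
    have h3 : Filter.Tendsto (fun r : ℝ => -(r ^ 2) / 2) Filter.atTop Filter.atBot :=
      h2.atBot_div_const (by norm_num : (0:ℝ) < 2)
    have h4 := Real.tendsto_exp_atBot.comp h3
    have h5 := h4.neg
    simpa using h5
  have hcont : ContinuousWithinAt (fun r : ℝ => -Real.exp (-(r ^ 2) / 2)) (Set.Ici 0) 0 := by
    apply Continuous.continuousWithinAt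
    continuity
  have := integral_Ioi_of_hasDerivAt_of_nonneg hcont hderiv hpos htends
  rw [this]
  norm_num

/-- Product of two Gaussian measures as a density on ℝ². -/
lemma gaussian_prod_withDensity :
    (gaussianReal 0 1).prod (gaussianReal 0 1) =
      (volume : Measure (ℝ × ℝ)).withDensity
        (fun p => gaussianPDF 0 1 p.1 * gaussianPDF 0 1 p.2) := by
  refine Measure.prod_eq fun s t hs ht => ?_
  rw [withDensity_apply _ (hs.prod ht), Measure.volume_eq_prod,
    ← Measure.prod_restrict,
    lintegral_prod_mul (measurable_gaussianPDF 0 1).aemeasurable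
      (measurable_gaussianPDF 0 1).aemeasurable,
    gaussianReal_apply 0 one_ne_zero s, gaussianReal_apply 0 one_ne_zero t]

lemma gaussianPDF_eq_coe_toNNReal (x : ℝ) :
    gaussianPDF 0 1 x = ((gaussianPDFReal 0 1 x).toNNReal : ℝ≥0∞) := rfl

/-- The core 2D Gaussian computation. -/
lemma gaussian_sign_integral (ρ : ℝ) (hρ : ρ ∈ Set.Icc (-1 : ℝ) 1) :
    ∫ p : ℝ × ℝ, Real.sign p.1 * Real.sign (ρ * p.1 + Real.sqrt (1 - ρ ^ 2) * p.2)
      ∂((gaussianReal 0 1).prod (gaussianReal 0 1)) = (2 / π) * Real.arcsin ρ := by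
  have hπ : 0 < π := Real.pi_pos
  obtain ⟨hρ1, hρ2⟩ := hρ
  set c : ℝ := Real.sqrt (1 - ρ ^ 2) with hc
  set S : ℝ × ℝ → ℝ := fun p => Real.sign p.1 * Real.sign (ρ * p.1 + c * p.2) with hS
  -- step 1: density form
  rw [gaussian_prod_withDensity]
  have hd : Measurable fun p : ℝ × ℝ =>
      ((gaussianPDFReal 0 1 p.1).toNNReal * (gaussianPDFReal 0 1 p.2).toNNReal : ℝ≥0) :=
    (((measurable_gaussianPDFReal 0 1).comp measurable_fst).real_toNNReal).mul
      (((measurable_gaussianPDFReal 0 1).comp measurable_snd).real_toNNReal)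
  have hdens : (fun p : ℝ × ℝ => gaussianPDF 0 1 p.1 * gaussianPDF 0 1 p.2) =
      fun p : ℝ × ℝ => (((gaussianPDFReal 0 1 p.1).toNNReal *
        (gaussianPDFReal 0 1 p.2).toNNReal : ℝ≥0) : ℝ≥0∞) := by
    funext p
    rw [gaussianPDF_eq_coe_toNNReal, gaussianPDF_eq_coe_toNNReal, ENNReal.coe_mul]
  rw [hdens, integral_withDensity_eq_integral_smul hd S]
  have hsmul : ∀ p : ℝ × ℝ,
      (((gaussianPDFReal 0 1 p.1).toNNReal * (gaussianPDFReal 0 1 p.2).toNNReal : ℝ≥0)) • S p =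
      (gaussianPDFReal 0 1 p.1 * gaussianPDFReal 0 1 p.2) * S p := by
    intro p
    rw [NNReal.smul_def, NNReal.coe_mul,
      Real.coe_toNNReal _ (gaussianPDFReal_nonneg 0 1 p.1),
      Real.coe_toNNReal _ (gaussianPDFReal_nonneg 0 1 p.2)]
    rw [smul_eq_mul]
  simp_rw [hsmul]
  -- step 2: polar coordinates
  rw [← integral_comp_polarCoord_symm
    (fun p : ℝ × ℝ => (gaussianPDFReal 0 1 p.1 * gaussianPDFReal 0 1 p.2) * S p)]
  -- step 3: simplify integrand on the target
  have htarget : polarCoord.target = Set.Ioi (0 : ℝ) ×ˢ Set.Ioo (-π) π := rfl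
  have hpdf : ∀ x : ℝ, gaussianPDFReal 0 1 x = (Real.sqrt (2 * π))⁻¹ * Real.exp (-(x ^ 2) / 2) := by
    intro x
    rw [gaussianPDFReal]
    norm_num
  have key : Set.EqOn
      (fun p : ℝ × ℝ => p.1 •
        ((gaussianPDFReal 0 1 (polarCoord.symm p).1 * gaussianPDFReal 0 1 (polarCoord.symm p).2) *
          S (polarCoord.symm p)))
      (fun p : ℝ × ℝ => (p.1 * ((2 * π)⁻¹ * Real.exp (-(p.1 ^ 2) / 2))) *
        (Real.sign (Real.cos p.2) * Real.sign (ρ * Real.cos p.2 + c * Real.sin p.2)))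
      polarCoord.target := by
    rintro ⟨r, θ⟩ hp
    rw [htarget] at hp
    obtain ⟨hr, hθ⟩ := hp
    have hr' : (0 : ℝ) < r := hr
    have hsymm : polarCoord.symm (r, θ) = (r * Real.cos θ, r * Real.sin θ) := rfl
    simp only [hsymm, smul_eq_mul]
    have hpyth : Real.cos θ ^ 2 + Real.sin θ ^ 2 = 1 := Real.cos_sq_add_sin_sq θ
    have hpdfprod : gaussianPDFReal 0 1 (r * Real.cos θ) * gaussianPDFReal 0 1 (r * Real.sin θ) =
        (2 * π)⁻¹ * Real.exp (-(r ^ 2) / 2) := by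
      rw [hpdf, hpdf]
      have hsq : Real.sqrt (2 * π) * Real.sqrt (2 * π) = 2 * π :=
        Real.mul_self_sqrt (by positivity)
      have hexp : Real.exp (-((r * Real.cos θ) ^ 2) / 2) * Real.exp (-((r * Real.sin θ) ^ 2) / 2) =
          Real.exp (-(r ^ 2) / 2) := by
        rw [← Real.exp_add]
        congr 1
        nlinarith [hpyth]
      calc (Real.sqrt (2 * π))⁻¹ * Real.exp (-((r * Real.cos θ) ^ 2) / 2) *
            ((Real.sqrt (2 * π))⁻¹ * Real.exp (-((r * Real.sin θ) ^ 2) / 2))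
          = (Real.sqrt (2 * π) * Real.sqrt (2 * π))⁻¹ *
            (Real.exp (-((r * Real.cos θ) ^ 2) / 2) * Real.exp (-((r * Real.sin θ) ^ 2) / 2)) := by
            rw [mul_inv]; ring
        _ = (2 * π)⁻¹ * Real.exp (-(r ^ 2) / 2) := by rw [hsq, hexp]
    have hsign : S (r * Real.cos θ, r * Real.sin θ) =
        Real.sign (Real.cos θ) * Real.sign (ρ * Real.cos θ + c * Real.sin θ) := by
      rw [hS]
      simp only
      rw [realSign_mul_of_pos hr']
      have : ρ * (r * Real.cos θ) + c * (r * Real.sin θ) =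
          r * (ρ * Real.cos θ + c * Real.sin θ) := by ring
      rw [this, realSign_mul_of_pos hr']
    rw [hpdfprod, hsign]
    ring
  rw [setIntegral_congr_fun (by rw [htarget]; exact measurableSet_Ioi.prod measurableSet_Ioo) key,
    htarget]
  -- step 4: factor the product integral
  rw [Measure.volume_eq_prod, ← Measure.prod_restrict]
  rw [integral_prod_mul (μ := volume.restrict (Set.Ioi (0:ℝ)))
    (ν := volume.restrict (Set.Ioo (-π) π))
    (fun r : ℝ => r * ((2 * π)⁻¹ * Real.exp (-(r ^ 2) / 2)))
    (fun θ : ℝ => Real.sign (Real.cos θ) * Real.sign (ρ * Real.cos θ + c * Real.sin θ))]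
  -- radial part
  have hrad : ∫ r in Set.Ioi (0 : ℝ), r * ((2 * π)⁻¹ * Real.exp (-(r ^ 2) / 2)) = (2 * π)⁻¹ := by
    have : ∀ r : ℝ, r * ((2 * π)⁻¹ * Real.exp (-(r ^ 2) / 2)) =
        (2 * π)⁻¹ * (r * Real.exp (-(r ^ 2) / 2)) := fun r => by ring
    simp_rw [this]
    rw [integral_const_mul, radial_integral, mul_one]
  -- angular part
  have hang : ∫ θ in Set.Ioo (-π) π,
      Real.sign (Real.cos θ) * Real.sign (ρ * Real.cos θ + c * Real.sin θ) =
      4 * Real.arcsin ρ := by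
    have hsin : ∀ θ : ℝ, ρ * Real.cos θ + c * Real.sin θ = Real.sin (θ + Real.arcsin ρ) := by
      intro θ
      rw [Real.sin_add, Real.sin_arcsin hρ1 hρ2, Real.cos_arcsin]
      ring
    simp_rw [hsin]
    rw [← integral_Ioc_eq_integral_Ioo, ← intervalIntegral.integral_of_le (by linarith)]
    exact angular_integral (Real.neg_pi_div_two_le_arcsin ρ) (Real.arcsin_le_pi_div_two ρ)
  rw [hrad, hang]
  field_simp
  ring

end Aux

/-- Arcsine law for one-bit quantized Gaussian signals: if `Z₁, Z₂` are independent
standard Gaussians and `W = ρ Z₁ + √(1 − ρ²) Z₂`, then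
`E[sign(Z₁)·sign(W)] = (2/π)·arcsin ρ`. -/
theorem arcsine_law_one_bit_gaussian
    {Ω : Type*} [MeasurableSpace Ω] (μ : Measure Ω) [IsProbabilityMeasure μ]
    (Z₁ Z₂ : Ω → ℝ) (hindep : IndepFun Z₁ Z₂ μ)
    (hZ₁ : Measure.map Z₁ μ = gaussianReal 0 1)
    (hZ₂ : Measure.map Z₂ μ = gaussianReal 0 1)
    (ρ : ℝ) (hρ : ρ ∈ Set.Icc (-1 : ℝ) 1)
    (W : Ω → ℝ)
    (hW : ∀ ω, W ω = ρ * Z₁ ω + Real.sqrt (1 - ρ ^ 2) * Z₂ ω) :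
    ∫ ω, Real.sign (Z₁ ω) * Real.sign (W ω) ∂μ = (2 / π) * Real.arcsin ρ := by
  have hZ1m : AEMeasurable Z₁ μ := by
    apply aemeasurable_of_map_neZero
    rw [hZ₁]
    infer_instance
  have hZ2m : AEMeasurable Z₂ μ := by
    apply aemeasurable_of_map_neZero
    rw [hZ₂]
    infer_instance
  have hmap : μ.map (fun ω => (Z₁ ω, Z₂ ω)) = (gaussianReal 0 1).prod (gaussianReal 0 1) := by
    rw [(indepFun_iff_map_prod_eq_prod_map_map hZ1m hZ2m).mp hindep, hZ₁, hZ₂]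
  set G : ℝ × ℝ → ℝ :=
    fun p => Real.sign p.1 * Real.sign (ρ * p.1 + Real.sqrt (1 - ρ ^ 2) * p.2) with hG
  have hGm : Measurable G :=
    (measurable_realSign.comp measurable_fst).mul
      (measurable_realSign.comp ((measurable_fst.const_mul ρ).add
        (measurable_snd.const_mul (Real.sqrt (1 - ρ ^ 2)))))
  calc ∫ ω, Real.sign (Z₁ ω) * Real.sign (W ω) ∂μ
      = ∫ ω, G (Z₁ ω, Z₂ ω) ∂μ := by
        refine integral_congr_ae (ae_of_all _ fun ω => ?_)
        rw [hG]; simp only [hW ω]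
    _ = ∫ p, G p ∂(μ.map (fun ω => (Z₁ ω, Z₂ ω))) :=
        (integral_map (hZ1m.prodMk hZ2m) hGm.aestronglyMeasurable).symm
    _ = (2 / π) * Real.arcsin ρ := by
        rw [hmap]
        exact gaussian_sign_integral ρ hρ
end

section
/- Let σ > 0 and let X, Z be independent real Gaussian random variables with mean 0 and variance σ²/2 on a probability space. Set y = X + i·Z and Q = (sign(X) + i·sign(Z))/√2. Then the quantization noise q = Q − (√(2/π)/σ)·y satisfies E[|q|²] = 1 − 2/π. -/
open MeasureTheory ProbabilityTheory Real Set Filter Topology NNReal ENNReal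

namespace OneBitAux

lemma measurable_sign' : Measurable Real.sign := by
  have h : Real.sign = fun r : ℝ => if r < 0 then (-1:ℝ) else if 0 < r then 1 else 0 :=
    funext fun r => rfl
  rw [h]
  exact Measurable.ite (measurableSet_lt measurable_id measurable_const)
    measurable_const <| Measurable.ite (measurableSet_lt measurable_const measurable_id)
    measurable_const measurable_const

lemma integral_Ioi_id_mul_exp {b : ℝ} (hb : 0 < b) :
    ∫ x in Ioi (0:ℝ), x * rexp (-b * x ^ 2) = (2 * b)⁻¹ := by
  have h := integral_mul_cexp_neg_mul_sq (b := (b:ℂ)) (by simpa using hb)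
  rw [← Complex.ofReal_inj, ← integral_complex_ofReal]
  push_cast
  exact h

lemma integrable_sq_mul_exp {b : ℝ} (hb : 0 < b) :
    Integrable (fun x : ℝ => x ^ 2 * rexp (-b * x ^ 2)) := by
  have h := integrable_rpow_mul_exp_neg_mul_sq hb (s := 2) (by norm_num)
  have h2 : (fun x : ℝ => x ^ (2:ℝ) * rexp (-b * x ^ 2))
      = fun x : ℝ => x ^ 2 * rexp (-b * x ^ 2) := by
    funext x; rw [← Real.rpow_natCast x 2]; norm_num
  rwa [h2] at h

lemma integrable_abs_mul_exp {b : ℝ} (hb : 0 < b) :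
    Integrable (fun x : ℝ => |x| * rexp (-b * x ^ 2)) := by
  have := (integrable_mul_exp_neg_mul_sq hb).abs
  refine this.congr ?_
  filter_upwards with x
  rw [abs_mul, abs_of_pos (exp_pos _)]

lemma integral_Ioi_sq_mul_exp {b : ℝ} (hb : 0 < b) :
    ∫ x in Ioi (0:ℝ), x ^ 2 * rexp (-b * x ^ 2) = (2*b)⁻¹ * (√(π/b) / 2) := by
  set c : ℝ := (2*b)⁻¹ with hc
  have hderiv : ∀ x ∈ Ici (0:ℝ), HasDerivAt (fun x : ℝ => -c * (x * rexp (-b * x ^ 2)))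
      (x ^ 2 * rexp (-b * x ^ 2) - c * rexp (-b * x ^ 2)) x := by
    intro x _
    have h1 : HasDerivAt (fun x : ℝ => x * rexp (-b * x ^ 2))
        (1 * rexp (-b * x ^ 2) + x * (rexp (-b * x ^ 2) * (-b * (2 * x ^ 1)))) x :=
      (hasDerivAt_id x).mul (((hasDerivAt_pow 2 x).const_mul (-b)).exp)
    have h2 := h1.const_mul (-c)
    refine h2.congr_deriv ?_
    have hb' : b ≠ 0 := hb.ne'
    rw [hc]
    field_simp
    ring
  have hsub : IntegrableOn (fun x : ℝ =>
      x ^ 2 * rexp (-b * x ^ 2) - c * rexp (-b * x ^ 2)) (Ioi 0) :=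
    ((integrable_sq_mul_exp hb).sub ((integrable_exp_neg_mul_sq hb).const_mul c)).integrableOn
  have htend : Tendsto (fun x : ℝ => -c * (x * rexp (-b * x ^ 2))) atTop (𝓝 (-c * 0)) := by
    refine Tendsto.const_mul _ ?_
    have ho := rpow_mul_exp_neg_mul_sq_isLittleO_exp_neg hb 1
    have hexp : Tendsto (fun x : ℝ => rexp (-(1/2) * x)) atTop (𝓝 0) := by
      have : Tendsto (fun x : ℝ => -(1/2) * x) atTop atBot :=
        Tendsto.const_mul_atTop_of_neg (by norm_num) tendsto_id
      exact Real.tendsto_exp_atBot.comp this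
    have := ho.trans_tendsto hexp
    refine this.congr' ?_
    filter_upwards [eventually_gt_atTop (0:ℝ)] with x hx
    rw [Real.rpow_one]
  have h0 := integral_Ioi_of_hasDerivAt_of_tendsto' hderiv hsub htend
  simp only [mul_zero, neg_zero, zero_mul, Real.exp_zero, ne_eq, mul_one,
    zero_pow, sub_zero] at h0
  have hsplit : ∫ x in Ioi (0:ℝ), (x ^ 2 * rexp (-b * x ^ 2) - c * rexp (-b * x ^ 2))
      = (∫ x in Ioi (0:ℝ), x ^ 2 * rexp (-b * x ^ 2))
        - ∫ x in Ioi (0:ℝ), c * rexp (-b * x ^ 2) :=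
    integral_sub (integrable_sq_mul_exp hb).integrableOn
      ((integrable_exp_neg_mul_sq hb).const_mul c).integrableOn
  rw [hsplit] at h0
  have hg : ∫ x in Ioi (0:ℝ), c * rexp (-b * x ^ 2) = c * (√(π/b) / 2) := by
    rw [integral_const_mul, integral_gaussian_Ioi]
  have : ∫ x in Ioi (0:ℝ), x ^ 2 * rexp (-b * x ^ 2)
      = ∫ x in Ioi (0:ℝ), c * rexp (-b * x ^ 2) := by linarith
  rw [this, hg]

lemma integral_sq_mul_exp {b : ℝ} (hb : 0 < b) :
    ∫ x : ℝ, x ^ 2 * rexp (-b * x ^ 2) = (2*b)⁻¹ * √(π/b) := by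
  have h := integral_comp_abs (f := fun t : ℝ => t ^ 2 * rexp (-b * t ^ 2))
  simp only [sq_abs] at h
  rw [h, integral_Ioi_sq_mul_exp hb]
  ring

lemma integral_abs_mul_exp {b : ℝ} (hb : 0 < b) :
    ∫ x : ℝ, |x| * rexp (-b * x ^ 2) = b⁻¹ := by
  have h := integral_comp_abs (f := fun t : ℝ => t * rexp (-b * t ^ 2))
  simp only [sq_abs] at h
  rw [h, integral_Ioi_id_mul_exp hb]
  rw [mul_inv, ← mul_assoc]
  norm_num


lemma integral_gaussianReal_eq {v : ℝ≥0} (hv : v ≠ 0) (f : ℝ → ℝ) :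
    ∫ x, f x ∂(gaussianReal 0 v) = ∫ x, f x * gaussianPDFReal 0 v x := by
  rw [gaussianReal_of_var_ne_zero _ hv]
  have hpdf : gaussianPDF 0 v = fun x => ((gaussianPDFReal 0 v x).toNNReal : ℝ≥0∞) := rfl
  rw [hpdf, integral_withDensity_eq_integral_smul
    ((measurable_gaussianPDFReal 0 v).real_toNNReal) f]
  congr 1
  funext x
  rw [NNReal.smul_def, Real.coe_toNNReal _ (gaussianPDFReal_nonneg 0 v x), smul_eq_mul, mul_comm]

lemma integrable_gaussianReal_iff {v : ℝ≥0} (hv : v ≠ 0) {f : ℝ → ℝ} :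
    Integrable f (gaussianReal 0 v) ↔
      Integrable (fun x => f x * gaussianPDFReal 0 v x) := by
  rw [gaussianReal_of_var_ne_zero _ hv]
  rw [integrable_withDensity_iff (measurable_gaussianPDF 0 v)
    (Filter.Eventually.of_forall fun x => ENNReal.ofReal_lt_top)]
  constructor <;> intro h <;> refine h.congr ?_ <;> filter_upwards with x <;>
    rw [gaussianPDF, ENNReal.toReal_ofReal (gaussianPDFReal_nonneg 0 v x)]

lemma gaussianPDFReal_eq {v : ℝ≥0} (hv : v ≠ 0) :
    gaussianPDFReal 0 v = fun x =>
      (√(2 * π * v))⁻¹ * rexp (-(2 * (v:ℝ))⁻¹ * x ^ 2) := by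
  funext x
  rw [gaussianPDFReal]
  congr 1
  rw [sub_zero]
  rw [neg_div, div_eq_mul_inv, neg_mul, mul_comm]

lemma coe_pos_of_ne_zero {v : ℝ≥0} (hv : v ≠ 0) : (0:ℝ) < v :=
  NNReal.coe_pos.mpr (pos_iff_ne_zero.mpr hv)

lemma integral_sq_gaussianReal {v : ℝ≥0} (hv : v ≠ 0) :
    ∫ x, x ^ 2 ∂(gaussianReal 0 v) = (v : ℝ) := by
  have hvr : (0:ℝ) < v := coe_pos_of_ne_zero hv
  have hb : (0:ℝ) < (2*(v:ℝ))⁻¹ := by positivity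
  rw [integral_gaussianReal_eq hv, gaussianPDFReal_eq hv]
  have hrw : (fun x : ℝ => x^2 * ((√(2*π*(v:ℝ)))⁻¹ * rexp (-(2*(v:ℝ))⁻¹ * x^2)))
      = fun x : ℝ => (√(2*π*(v:ℝ)))⁻¹ * (x^2 * rexp (-(2*(v:ℝ))⁻¹ * x^2)) :=
    funext fun x => by ring
  rw [hrw, integral_const_mul, integral_sq_mul_exp hb]
  have h1 : π / (2*(v:ℝ))⁻¹ = 2*π*(v:ℝ) := by
    rw [div_inv_eq_mul]; ring
  have h2 : (2*(2*(v:ℝ))⁻¹)⁻¹ = (v:ℝ) := by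
    rw [mul_inv, inv_inv]; field_simp
  rw [h1, h2]
  have hs : √(2*π*(v:ℝ)) ≠ 0 := by positivity
  field_simp

lemma integral_abs_gaussianReal {v : ℝ≥0} (hv : v ≠ 0) :
    ∫ x, |x| ∂(gaussianReal 0 v) = 2*(v:ℝ)*(√(2*π*(v:ℝ)))⁻¹ := by
  have hvr : (0:ℝ) < v := coe_pos_of_ne_zero hv
  have hb : (0:ℝ) < (2*(v:ℝ))⁻¹ := by positivity
  rw [integral_gaussianReal_eq hv, gaussianPDFReal_eq hv]
  have hrw : (fun x : ℝ => |x| * ((√(2*π*(v:ℝ)))⁻¹ * rexp (-(2*(v:ℝ))⁻¹ * x^2)))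
      = fun x : ℝ => (√(2*π*(v:ℝ)))⁻¹ * (|x| * rexp (-(2*(v:ℝ))⁻¹ * x^2)) :=
    funext fun x => by ring
  rw [hrw, integral_const_mul, integral_abs_mul_exp hb]
  rw [inv_inv]
  ring

lemma integrable_sq_gaussianReal {v : ℝ≥0} (hv : v ≠ 0) :
    Integrable (fun x : ℝ => x ^ 2) (gaussianReal 0 v) := by
  have hvr : (0:ℝ) < v := coe_pos_of_ne_zero hv
  have hb : (0:ℝ) < (2*(v:ℝ))⁻¹ := by positivity
  rw [integrable_gaussianReal_iff hv, gaussianPDFReal_eq hv]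
  refine ((integrable_sq_mul_exp hb).const_mul (√(2*π*(v:ℝ)))⁻¹).congr ?_
  filter_upwards with x
  ring

lemma integrable_abs_gaussianReal {v : ℝ≥0} (hv : v ≠ 0) :
    Integrable (fun x : ℝ => |x|) (gaussianReal 0 v) := by
  have hvr : (0:ℝ) < v := coe_pos_of_ne_zero hv
  have hb : (0:ℝ) < (2*(v:ℝ))⁻¹ := by positivity
  rw [integrable_gaussianReal_iff hv, gaussianPDFReal_eq hv]
  refine ((integrable_abs_mul_exp hb).const_mul (√(2*π*(v:ℝ)))⁻¹).congr ?_
  filter_upwards with x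
  ring

lemma sign_sq_expand {c t : ℝ} (ht : t ≠ 0) :
    (Real.sign t / √2 - c * t)^2 = 1/2 - (√2*c) * |t| + c^2 * t^2 := by
  have h2 : (√2:ℝ)^2 = 2 := Real.sq_sqrt (by norm_num)
  have hne : (√2:ℝ) ≠ 0 := by positivity
  rcases ht.lt_or_gt with h | h
  · rw [Real.sign_of_neg h, abs_of_neg h]
    field_simp
    linear_combination (-1 - 2*√2*c*t) * h2
  · rw [Real.sign_of_pos h, abs_of_pos h]
    field_simp
    linear_combination (-1 + 2*√2*c*t) * h2

lemma key_lemma {σ : ℝ} (hσ : 0 < σ) :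
    Integrable (fun t => (Real.sign t / √2 - (√(2/π)/σ) * t)^2)
      (gaussianReal 0 (σ^2/2).toNNReal) ∧
    ∫ t, (Real.sign t / √2 - (√(2/π)/σ) * t)^2 ∂(gaussianReal 0 (σ^2/2).toNNReal)
      = 1/2 - 1/π := by
  set c : ℝ := √(2/π)/σ with hcdef
  have hV : (((σ^2/2).toNNReal : ℝ≥0) : ℝ) = σ^2/2 := Real.coe_toNNReal _ (by positivity)
  have hVne : (σ^2/2).toNNReal ≠ 0 := by
    rw [Ne, Real.toNNReal_eq_zero]
    push_neg
    positivity
  have hVnull : (gaussianReal 0 (σ^2/2).toNNReal) {0} = 0 :=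
    gaussianReal_absolutelyContinuous 0 hVne (measure_singleton 0)
  have hne : ∀ᵐ t ∂(gaussianReal 0 (σ^2/2).toNNReal), t ≠ 0 := by
    rw [ae_iff]
    convert hVnull using 2
    ext t
    simp
  have hae : (fun t => (Real.sign t / √2 - c * t)^2)
      =ᵐ[gaussianReal 0 (σ^2/2).toNNReal] fun t => 1/2 - (√2*c) * |t| + c^2 * t^2 := by
    filter_upwards [hne] with t ht
    exact sign_sq_expand ht
  have hint : Integrable (fun t : ℝ => 1/2 - (√2*c)*|t| + c^2*t^2)
      (gaussianReal 0 (σ^2/2).toNNReal) :=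
    ((integrable_const _).sub ((integrable_abs_gaussianReal hVne).const_mul _)).add
      ((integrable_sq_gaussianReal hVne).const_mul _)
  refine ⟨hint.congr hae.symm, ?_⟩
  rw [integral_congr_ae hae]
  have h1 : Integrable (fun a : ℝ => 1/2 - √2*c*|a|) (gaussianReal 0 (σ^2/2).toNNReal) :=
    (integrable_const _).sub ((integrable_abs_gaussianReal hVne).const_mul _)
  have h2 : Integrable (fun a : ℝ => c^2*a^2) (gaussianReal 0 (σ^2/2).toNNReal) :=
    (integrable_sq_gaussianReal hVne).const_mul _
  have e1 : ∫ a, (1/2 - √2*c*|a| + c^2*a^2) ∂(gaussianReal 0 (σ^2/2).toNNReal)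
        = (∫ a, (1/2 - √2*c*|a|) ∂(gaussianReal 0 (σ^2/2).toNNReal))
          + ∫ a, c^2*a^2 ∂(gaussianReal 0 (σ^2/2).toNNReal) := integral_add h1 h2
  have e2 : ∫ a, (1/2 - √2*c*|a|) ∂(gaussianReal 0 (σ^2/2).toNNReal)
        = (∫ _, (1/2:ℝ) ∂(gaussianReal 0 (σ^2/2).toNNReal))
          - ∫ a, √2*c*|a| ∂(gaussianReal 0 (σ^2/2).toNNReal) :=
    integral_sub (integrable_const _) ((integrable_abs_gaussianReal hVne).const_mul _)
  have e3 : ∫ a, √2*c*|a| ∂(gaussianReal 0 (σ^2/2).toNNReal)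
        = √2*c * ∫ a, |a| ∂(gaussianReal 0 (σ^2/2).toNNReal) := integral_const_mul _ _
  have e4 : ∫ a, c^2*a^2 ∂(gaussianReal 0 (σ^2/2).toNNReal)
        = c^2 * ∫ a, a^2 ∂(gaussianReal 0 (σ^2/2).toNNReal) := integral_const_mul _ _
  rw [e1, e2, e3, e4, integral_const,
    integral_abs_gaussianReal hVne, integral_sq_gaussianReal hVne]
  simp only [measure_univ, ENNReal.toReal_one, probReal_univ, smul_eq_mul, one_mul]
  rw [hV]
  have hπ : (0:ℝ) < π := Real.pi_pos
  have hsπ : √π ≠ 0 := by positivity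
  have hσ' : σ ≠ 0 := hσ.ne'
  have hsqrt : √(2*π*(σ^2/2)) = √π * σ := by
    rw [show 2*π*(σ^2/2) = π * σ^2 by ring, Real.sqrt_mul Real.pi_pos.le, Real.sqrt_sq hσ.le]
  have hc2 : (√(2/π))^2 = 2/π := Real.sq_sqrt (by positivity)
  have key1 : √2 * √(2/π) = 2/√π := by
    rw [← Real.sqrt_mul (by norm_num : (0:ℝ) ≤ 2), show (2:ℝ)*(2/π) = 4/π by ring,
      Real.sqrt_div (by norm_num : (0:ℝ) ≤ 4), show (4:ℝ) = 2^2 by norm_num,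
      Real.sqrt_sq (by norm_num : (0:ℝ) ≤ 2)]
  have hpi : √π * √π = π := Real.mul_self_sqrt Real.pi_pos.le
  rw [hsqrt, hcdef, div_pow, hc2, mul_div_assoc', key1]
  field_simp
  ring_nf
  linear_combination 4 * hpi

end OneBitAux

/-- Power of the Bussgang quantization noise of a one-bit quantizer applied to a
circularly symmetric complex Gaussian `y = X + iZ` with `E[|y|²] = σ²`: the noise
`q = Q − (√(2/π)/σ)·y` satisfies `E[|q|²] = 1 − 2/π`. -/
theorem one_bit_quantization_noise_power
    {Ω : Type*} [MeasurableSpace Ω] (μ : Measure Ω) [IsProbabilityMeasure μ]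
    (σ : ℝ) (hσ : 0 < σ)
    (X Z : Ω → ℝ) (hindep : IndepFun X Z μ)
    (hX : Measure.map X μ = gaussianReal 0 (σ ^ 2 / 2).toNNReal)
    (hZ : Measure.map Z μ = gaussianReal 0 (σ ^ 2 / 2).toNNReal)
    (y Q q : Ω → ℂ)
    (hy : ∀ ω, y ω = X ω + Z ω * Complex.I)
    (hQ : ∀ ω, Q ω = (Real.sign (X ω) + Real.sign (Z ω) * Complex.I) /
      Real.sqrt 2)
    (hq : ∀ ω, q ω = Q ω - (Real.sqrt (2 / π) / σ : ℝ) * y ω) :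
    ∫ ω, ‖q ω‖ ^ 2 ∂μ = 1 - 2 / π := by
  obtain ⟨hint, hval⟩ := OneBitAux.key_lemma hσ
  set c : ℝ := Real.sqrt (2 / π) / σ with hc
  have hgm : Measurable fun t : ℝ => (Real.sign t / √2 - c * t) ^ 2 :=
    ((OneBitAux.measurable_sign'.div_const _).sub (measurable_id.const_mul c)).pow_const 2
  have hXae : AEMeasurable X μ := by
    by_contra h
    rw [Measure.map_of_not_aemeasurable h] at hX
    have h2 : (gaussianReal 0 (σ ^ 2 / 2).toNNReal) Set.univ = 0 := by
      rw [← hX]; simp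
    rw [measure_univ] at h2
    exact one_ne_zero h2
  have hZae : AEMeasurable Z μ := by
    by_contra h
    rw [Measure.map_of_not_aemeasurable h] at hZ
    have h2 : (gaussianReal 0 (σ ^ 2 / 2).toNNReal) Set.univ = 0 := by
      rw [← hZ]; simp
    rw [measure_univ] at h2
    exact one_ne_zero h2
  have hiX : Integrable (fun ω => (Real.sign (X ω) / √2 - c * X ω) ^ 2) μ := by
    have h1 : Integrable (fun t : ℝ => (Real.sign t / √2 - c * t) ^ 2) (Measure.map X μ) := by
      rw [hX]; exact hint
    have h2 := (integrable_map_measure hgm.aestronglyMeasurable hXae).mp h1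
    simpa [Function.comp_def] using h2
  have hiZ : Integrable (fun ω => (Real.sign (Z ω) / √2 - c * Z ω) ^ 2) μ := by
    have h1 : Integrable (fun t : ℝ => (Real.sign t / √2 - c * t) ^ 2) (Measure.map Z μ) := by
      rw [hZ]; exact hint
    have h2 := (integrable_map_measure hgm.aestronglyMeasurable hZae).mp h1
    simpa [Function.comp_def] using h2
  have hpt : ∀ ω, ‖q ω‖ ^ 2
      = (Real.sign (X ω) / √2 - c * X ω) ^ 2 + (Real.sign (Z ω) / √2 - c * Z ω) ^ 2 := by
    intro ω
    have hs2 : ((Real.sqrt 2 : ℝ) : ℂ) ≠ 0 := Complex.ofReal_ne_zero.mpr (by positivity)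
    have hqω : q ω = ((Real.sign (X ω) / Real.sqrt 2 - c * X ω : ℝ) : ℂ)
        + ((Real.sign (Z ω) / Real.sqrt 2 - c * Z ω : ℝ) : ℂ) * Complex.I := by
      rw [hq, hQ, hy]
      push_cast
      field_simp
      ring
    rw [hqω, Complex.sq_norm, Complex.normSq_add_mul_I]
  rw [integral_congr_ae (Filter.Eventually.of_forall hpt), integral_add hiX hiZ]
  have hXint : ∫ ω, (Real.sign (X ω) / √2 - c * X ω) ^ 2 ∂μ = 1 / 2 - 1 / π := by
    rw [← integral_map hXae hgm.aestronglyMeasurable, hX]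
    exact hval
  have hZint : ∫ ω, (Real.sign (Z ω) / √2 - c * Z ω) ^ 2 ∂μ = 1 / 2 - 1 / π := by
    rw [← integral_map hZae hgm.aestronglyMeasurable, hZ]
    exact hval
  rw [hXint, hZint]
  ring
end
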